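/- arXiv:1806.05869 — 6 statements merged into one kernel-verified Lean document; each statement's English description precedes it below -/
import Mathlib

section
/- Let p be a prime and let x be a real number with |x| ≤ 2. Then the series ∑_{r=0}^∞ (r+1)·p^{−r/2}·X_r(x) converges and its sum equals (p − 1)/(√p + 1/√p − x)². -/
/-- `X ℓ x = U ℓ (x/2)`, the Chebyshev polynomial normalized by
`X ℓ (2 cos θ) = sin ((ℓ+1) θ) / sin θ`. -/
noncomputable def chebX (ℓ : ℕ) (x : ℝ) : ℝ :=
  (Polynomial.Chebyshev.U ℝ (ℓ : ℤ)).eval (x / 2)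

lemma chebX_zero (x : ℝ) : chebX 0 x = 1 := by
  simp [chebX, Polynomial.Chebyshev.U_zero]

lemma chebX_one (x : ℝ) : chebX 1 x = x := by
  simp [chebX, Polynomial.Chebyshev.U_one]; ring

lemma chebX_add_two (r : ℕ) (x : ℝ) :
    chebX (r + 2) x = x * chebX (r + 1) x - chebX r x := by
  unfold chebX
  have h2 : ((r + 2 : ℕ) : ℤ) = (r : ℤ) + 2 := by push_cast; ring
  have h1 : ((r + 1 : ℕ) : ℤ) = (r : ℤ) + 1 := by push_cast; ring
  rw [h2, h1, Polynomial.Chebyshev.U_add_two]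
  simp only [Polynomial.eval_sub, Polynomial.eval_mul, Polynomial.eval_ofNat, Polynomial.eval_X]
  ring

lemma chebX_energy (x : ℝ) : ∀ r : ℕ,
    (chebX (r + 1) x - (x / 2) * chebX r x) ^ 2 + (1 - (x / 2) ^ 2) * (chebX r x) ^ 2 = 1 := by
  intro r
  induction r with
  | zero => rw [chebX_zero, chebX_one]; ring
  | succ n ih =>
      rw [chebX_add_two]
      linear_combination ih

lemma chebX_abs_le (x : ℝ) (hx : |x| ≤ 2) : ∀ r : ℕ, |chebX r x| ≤ (r : ℝ) + 1 := by
  intro r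
  induction r with
  | zero => rw [chebX_zero]; norm_num
  | succ n ih =>
      have hE := chebX_energy x n
      have hx2 : x ^ 2 ≤ 4 := by nlinarith [abs_nonneg x, sq_abs x, abs_le.mp hx]
      have h1 : |chebX (n + 1) x - (x / 2) * chebX n x| ≤ 1 := by
        have h0 : (1 - (x / 2) ^ 2) * (chebX n x) ^ 2 ≥ 0 := by nlinarith [sq_nonneg (chebX n x)]
        rw [abs_le]; constructor <;> nlinarith [sq_nonneg (chebX (n + 1) x - (x / 2) * chebX n x)]
      have h2 : |chebX (n + 1) x| ≤ |x / 2| * |chebX n x| + 1 := by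
        calc |chebX (n + 1) x| = |(x / 2) * chebX n x + (chebX (n + 1) x - (x / 2) * chebX n x)| := by ring_nf
          _ ≤ |(x / 2) * chebX n x| + |chebX (n + 1) x - (x / 2) * chebX n x| := abs_add_le _ _
          _ ≤ |x / 2| * |chebX n x| + 1 := by rw [abs_mul]; linarith
      have hx1 : |x / 2| ≤ 1 := by rw [abs_div]; simp; linarith [abs_le.mp hx, abs_nonneg x]
      have := mul_le_mul hx1 ih (abs_nonneg _) zero_le_one
      push_cast
      calc |chebX (n + 1) x| ≤ |x/2| * |chebX n x| + 1 := h2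
        _ ≤ 1 * ((n : ℝ) + 1) + 1 := by
            gcongr
        _ = (n : ℝ) + 1 + 1 := by ring

lemma aux_rec (x t : ℝ) (r : ℕ) :
    ((r : ℝ) + 5) * t ^ (r + 4) * chebX (r + 4) x =
      2 * x * t * (((r : ℝ) + 4) * t ^ (r + 3) * chebX (r + 3) x)
        - (x ^ 2 + 2) * t ^ 2 * (((r : ℝ) + 3) * t ^ (r + 2) * chebX (r + 2) x)
        + 2 * x * t ^ 3 * (((r : ℝ) + 2) * t ^ (r + 1) * chebX (r + 1) x)
        - t ^ 4 * (((r : ℝ) + 1) * t ^ r * chebX r x) := by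
  have e2 := chebX_add_two r x
  have e3 : chebX (r + 3) x = x * chebX (r + 2) x - chebX (r + 1) x := by
    have := chebX_add_two (r + 1) x
    simpa [show r + 1 + 2 = r + 3 from by omega, show r + 1 + 1 = r + 2 from by omega] using this
  have e4 : chebX (r + 4) x = x * chebX (r + 3) x - chebX (r + 2) x := by
    have := chebX_add_two (r + 2) x
    simpa [show r + 2 + 2 = r + 4 from by omega, show r + 2 + 1 = r + 3 from by omega] using this
  rw [e4, e3, e2]
  ring

/-- For a prime `p` and `|x| ≤ 2`, the series `∑_{r≥0} (r+1) p^{-r/2} X_r(x)`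
converges, with sum `(p - 1) / (√p + 1/√p - x)²`. -/
theorem tsum_chebX_weighted (p : ℕ) (hp : p.Prime) (x : ℝ) (hx : |x| ≤ 2) :
    Summable (fun r : ℕ => ((r : ℝ) + 1) * (p : ℝ) ^ (-(r : ℝ) / 2) * chebX r x) ∧
    ∑' r : ℕ, ((r : ℝ) + 1) * (p : ℝ) ^ (-(r : ℝ) / 2) * chebX r x =
      ((p : ℝ) - 1) / (Real.sqrt p + 1 / Real.sqrt p - x) ^ 2 := by
  set t : ℝ := (Real.sqrt p)⁻¹ with ht_def
  have hp0 : (0 : ℝ) ≤ p := Nat.cast_nonneg p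
  have hp2 : (2 : ℝ) ≤ p := by exact_mod_cast hp.two_le
  have hsp1 : (1 : ℝ) < Real.sqrt p := by
    have : Real.sqrt 1 < Real.sqrt p := Real.sqrt_lt_sqrt (by norm_num) (by linarith)
    simpa using this
  have hsp0 : (0 : ℝ) < Real.sqrt p := by linarith
  have ht0 : 0 < t := by positivity
  have ht1 : t < 1 := by
    rw [ht_def, inv_lt_one_iff₀]; right; exact hsp1
  have htp : t ^ 2 * p = 1 := by
    rw [ht_def]
    rw [← Real.sqrt_sq hp0]
    field_simp
    rw [Real.sq_sqrt (Real.sqrt_nonneg _)]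
  -- the rewritten function
  set g : ℕ → ℝ := fun r => ((r : ℝ) + 1) * t ^ r * chebX r x with hg_def
  have hpow : ∀ r : ℕ, (p : ℝ) ^ (-(r : ℝ) / 2) = t ^ r := by
    intro r
    rw [show -(r : ℝ) / 2 = (-(1 : ℝ) / 2) * r by ring, Real.rpow_mul hp0,
      Real.rpow_natCast]
    congr 1
    rw [show (-(1 : ℝ) / 2) = -(1 / 2) by ring, Real.rpow_neg hp0, ← Real.sqrt_eq_rpow]
  have hfg : (fun r : ℕ => ((r : ℝ) + 1) * (p : ℝ) ^ (-(r : ℝ) / 2) * chebX r x) = g := by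
    funext r; rw [hpow]
  -- summability
  have hsum : Summable g := by
    have hb : Summable (fun r : ℕ => ((r : ℝ) + 1) ^ 2 * t ^ r) := by
      have h1 : Summable (fun r : ℕ => (r : ℝ) ^ 2 * t ^ r) :=
        summable_pow_mul_geometric_of_norm_lt_one 2 (by
          rw [Real.norm_eq_abs, abs_of_pos ht0]; exact ht1)
      have h2 : Summable (fun r : ℕ => (r : ℝ) ^ 1 * t ^ r) :=
        summable_pow_mul_geometric_of_norm_lt_one 1 (by
          rw [Real.norm_eq_abs, abs_of_pos ht0]; exact ht1)
      have h3 : Summable (fun r : ℕ => t ^ r) :=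
        summable_geometric_of_lt_one (le_of_lt ht0) ht1
      have := (h1.add ((h2.mul_left 2).add h3))
      apply this.congr
      intro r; simp; ring
    apply Summable.of_abs
    apply Summable.of_nonneg_of_le (fun r => abs_nonneg _) _ hb
    intro r
    rw [hg_def]
    simp only
    rw [abs_mul, abs_mul]
    have h1 : |((r : ℝ) + 1)| = (r : ℝ) + 1 := abs_of_pos (by positivity)
    have h2 : |t ^ r| = t ^ r := abs_of_pos (by positivity)
    rw [h1, h2]
    have hb1 := chebX_abs_le x hx r
    have htr : (0:ℝ) ≤ ((r:ℝ)+1) * t ^ r := by positivity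
    calc ((r:ℝ)+1) * t ^ r * |chebX r x| ≤ ((r:ℝ)+1) * t ^ r * ((r:ℝ)+1) :=
          mul_le_mul_of_nonneg_left hb1 htr
      _ = ((r:ℝ)+1)^2 * t ^ r := by ring
  constructor
  · rw [hfg]; exact hsum
  rw [hfg]
  set S : ℝ := ∑' r, g r with hS
  -- shifted summability
  have hs1 : Summable (fun r => g (r + 1)) := (summable_nat_add_iff 1).mpr hsum
  have hs2 : Summable (fun r => g (r + 2)) := (summable_nat_add_iff 2).mpr hsum
  have hs3 : Summable (fun r => g (r + 3)) := (summable_nat_add_iff 3).mpr hsum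
  -- shift identities
  have t1 : ∑' r, g (r + 1) = S - g 0 := by
    have h := Summable.tsum_eq_zero_add hsum
    rw [hS]; linarith [h]
  have step : ∀ k : ℕ, Summable (fun r => g (r + k)) →
      ∑' r, g (r + (k + 1)) = (∑' r, g (r + k)) - g k := by
    intro k hk
    have h := Summable.tsum_eq_zero_add hk
    have hrw : ∀ b : ℕ, b + 1 + k = b + (k + 1) := by intro b; omega
    simp only [hrw, Nat.zero_add] at h
    linarith [h]
  have t2 : ∑' r, g (r + 2) = S - g 0 - g 1 := by
    have := step 1 hs1; rw [this, t1]
  have t3 : ∑' r, g (r + 3) = S - g 0 - g 1 - g 2 := by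
    have := step 2 hs2; rw [this, t2]
  have t4 : ∑' r, g (r + 4) = S - g 0 - g 1 - g 2 - g 3 := by
    have := step 3 hs3; rw [this, t3]
  -- recurrence on g
  have key : ∀ r : ℕ, g (r + 4) =
      2 * x * t * g (r + 3) - (x ^ 2 + 2) * t ^ 2 * g (r + 2)
        + 2 * x * t ^ 3 * g (r + 1) - t ^ 4 * g r := by
    intro r
    have h := aux_rec x t r
    rw [hg_def]
    simp only
    push_cast
    linear_combination h
  -- the master equation
  have T4 : ∑' r, g (r + 4) =
      2 * x * t * (∑' r, g (r + 3)) - (x ^ 2 + 2) * t ^ 2 * (∑' r, g (r + 2))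
        + 2 * x * t ^ 3 * (∑' r, g (r + 1)) - t ^ 4 * S := by
    rw [tsum_congr key]
    rw [Summable.tsum_sub (((hs3.mul_left _).sub (hs2.mul_left _)).add (hs1.mul_left _)) (hsum.mul_left _),
      Summable.tsum_add ((hs3.mul_left _).sub (hs2.mul_left _)) (hs1.mul_left _),
      Summable.tsum_sub (hs3.mul_left _) (hs2.mul_left _),
      tsum_mul_left, tsum_mul_left, tsum_mul_left, tsum_mul_left]
  have hg0 : g 0 = 1 := by rw [hg_def]; simp [chebX_zero]
  have hg1 : g 1 = 2 * t * x := by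
    show (((1:ℕ):ℝ) + 1) * t ^ 1 * chebX 1 x = _
    rw [chebX_one]; norm_num
  have hc2 : chebX 2 x = x ^ 2 - 1 := by
    have := chebX_add_two 0 x
    simp only [Nat.zero_add] at this
    rw [this, chebX_one, chebX_zero]; ring
  have hc3 : chebX 3 x = x ^ 3 - 2 * x := by
    have := chebX_add_two 1 x
    rw [show (1:ℕ) + 2 = 3 from rfl, show (1:ℕ)+1 = 2 from rfl] at this
    rw [this, hc2, chebX_one]; ring
  have hg2 : g 2 = 3 * t ^ 2 * (x ^ 2 - 1) := by
    show (((2:ℕ):ℝ) + 1) * t ^ 2 * chebX 2 x = _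
    rw [hc2]; norm_num
  have hg3 : g 3 = 4 * t ^ 3 * (x ^ 3 - 2 * x) := by
    show (((3:ℕ):ℝ) + 1) * t ^ 3 * chebX 3 x = _
    rw [hc3]; norm_num
  have E := T4
  rw [t4, t3, t2, t1, hg0, hg1, hg2, hg3] at E
  have main : S * (1 - x * t + t ^ 2) ^ 2 = 1 - t ^ 2 := by linear_combination E
  -- final algebra
  have hxle := abs_le.mp hx
  have hDpos : 0 < 1 - x * t + t ^ 2 := by nlinarith [sq_nonneg (1 - t)]
  have hsqrt : Real.sqrt p = t⁻¹ := by rw [ht_def, inv_inv]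
  rw [hsqrt]
  have hden : t⁻¹ + 1 / t⁻¹ - x = (1 - x * t + t ^ 2) / t := by
    field_simp
    ring
  rw [hden]
  rw [div_pow, div_div_eq_mul_div, eq_div_iff (pow_ne_zero 2 (ne_of_gt hDpos))]
  linear_combination main - htp
end

section
/- Let p be a prime and r ≥ 0 an integer. Then ∫_ℝ X_r(x) · (p − 1)/(√p + 1/√p − x)² dμ_∞(x) = (r + 1)·p^{−r/2}. -/
open MeasureTheory

/-- The Sato–Tate measure on `ℝ`: density `(1/π) √(1 - x²/4)` on `[-2, 2]`,
zero outside. -/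
noncomputable def satoTate : Measure ℝ :=
  volume.withDensity (fun x => ENNReal.ofReal ((1 / Real.pi) * Real.sqrt (1 - x ^ 2 / 4)))

open Real intervalIntegral Set
open scoped ENNReal NNReal

noncomputable def Dk (t θ : ℝ) : ℝ := 1 - 2*t*Real.cos θ + t^2

lemma Dk_pos {t : ℝ} (h0 : 0 < t) (h1 : t < 1) (θ : ℝ) : 0 < Dk t θ := by
  have h2 := Real.cos_le_one θ
  have h3 := Real.neg_one_le_cos θ
  unfold Dk; nlinarith

@[fun_prop] lemma contDk (t : ℝ) : Continuous (fun θ => Dk t θ) := by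
  unfold Dk; fun_prop

lemma intInvDk {t : ℝ} (h0 : 0 < t) (h1 : t < 1) (f : ℝ → ℝ) (hf : Continuous f) (a b : ℝ) :
    IntervalIntegrable (fun θ => f θ / Dk t θ) volume a b :=
  (hf.div (contDk t) (fun θ => ne_of_gt (Dk_pos h0 h1 θ))).intervalIntegrable a b

lemma J0 {t : ℝ} (h0 : 0 < t) (h1 : t < 1) :
    ∫ θ in (0:ℝ)..π, 1 / Dk t θ = π / (1 - t^2) := by
  have ht2 : (1:ℝ) - t^2 ≠ 0 := by nlinarith
  have hden : ∀ θ : ℝ, 1 - t * Real.cos θ > 0 := fun θ => by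
    have := Real.cos_le_one θ; have := Real.neg_one_le_cos θ; nlinarith
  set G : ℝ → ℝ := fun θ => (1/(1-t^2)) * (θ + 2 * Real.arctan (t * Real.sin θ / (1 - t * Real.cos θ))) with hG
  have hd : ∀ θ ∈ Set.uIcc (0:ℝ) π, HasDerivAt G (1 / Dk t θ) θ := by
    intro θ _
    have hne : (1 - t * Real.cos θ) ≠ 0 := ne_of_gt (hden θ)
    have h1' : HasDerivAt (fun θ => t * Real.sin θ / (1 - t * Real.cos θ))
        ((t * Real.cos θ * (1 - t * Real.cos θ) - t * Real.sin θ * (t * Real.sin θ)) / (1 - t * Real.cos θ)^2) θ := by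
      have hnum : HasDerivAt (fun θ => t * Real.sin θ) (t * Real.cos θ) θ :=
        (Real.hasDerivAt_sin θ).const_mul t
      have hden' : HasDerivAt (fun θ => 1 - t * Real.cos θ) (t * Real.sin θ) θ := by
        have := ((Real.hasDerivAt_cos θ).const_mul t).const_sub 1
        simpa using this
      exact hnum.div hden' hne
    have h3' : HasDerivAt G
        ((1/(1-t^2)) * (1 + 2 * (1 / (1 + (t * Real.sin θ / (1 - t * Real.cos θ))^2) *
          ((t * Real.cos θ * (1 - t * Real.cos θ) - t * Real.sin θ * (t * Real.sin θ)) / (1 - t * Real.cos θ)^2)))) θ :=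
      ((hasDerivAt_id θ).add (h1'.arctan.const_mul 2)).const_mul _
    convert h3' using 1
    have hDne : Dk t θ ≠ 0 := ne_of_gt (Dk_pos h0 h1 θ)
    have hsin : Real.sin θ ^2 = 1 - Real.cos θ^2 := by
      have := Real.sin_sq_add_cos_sq θ; nlinarith
    unfold Dk at *
    have key : 1 + (t * Real.sin θ / (1 - t * Real.cos θ)) ^ 2
        = (1 - 2*t*Real.cos θ + t^2) / (1 - t*Real.cos θ)^2 := by
      field_simp
      linear_combination t^2 * hsin
    rw [key]
    have num : t * Real.cos θ * (1 - t * Real.cos θ) - t * Real.sin θ * (t * Real.sin θ)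
        = t * Real.cos θ - t^2 := by
      linear_combination (-t^2) * hsin
    rw [num]
    field_simp
    ring
  have hint : IntervalIntegrable (fun θ => 1 / Dk t θ) volume 0 π :=
    intInvDk h0 h1 _ continuous_const 0 π
  rw [intervalIntegral.integral_eq_sub_of_hasDerivAt hd hint]
  simp [hG, Real.sin_pi, Real.arctan_zero]
  field_simp

lemma intCos (k : ℕ) : ∫ θ in (0:ℝ)..π, Real.cos (((k:ℝ)+1) * θ) = 0 := by
  have hk : ((k:ℝ)+1) ≠ 0 := by positivity
  have hd : ∀ θ ∈ Set.uIcc (0:ℝ) π,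
      HasDerivAt (fun θ => Real.sin (((k:ℝ)+1) * θ) / ((k:ℝ)+1)) (Real.cos (((k:ℝ)+1) * θ)) θ := by
    intro θ _
    have h1 : HasDerivAt (fun θ : ℝ => ((k:ℝ)+1) * θ) ((k:ℝ)+1) θ := by
      simpa using (hasDerivAt_id θ).const_mul ((k:ℝ)+1)
    have := ((Real.hasDerivAt_sin (((k:ℝ)+1) * θ)).comp θ h1).div_const ((k:ℝ)+1)
    simpa [mul_comm, mul_div_assoc, mul_div_cancel_left₀ _ hk] using this
  rw [intervalIntegral.integral_eq_sub_of_hasDerivAt hd ((by fun_prop : Continuous fun θ : ℝ => Real.cos (((k:ℝ)+1) * θ)).intervalIntegrable 0 π)]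
  have : Real.sin (((k:ℝ)+1) * π) = 0 := by
    have := Real.sin_nat_mul_pi (k+1); push_cast at this ⊢; simpa using this
  simp [this]

lemma Jk {t : ℝ} (h0 : 0 < t) (h1 : t < 1) (k : ℕ) :
    ∫ θ in (0:ℝ)..π, Real.cos ((k:ℝ) * θ) / Dk t θ = π * t^k / (1 - t^2) := by
  have ht2 : (1:ℝ) - t^2 ≠ 0 := by nlinarith
  have ht : t ≠ 0 := ne_of_gt h0
  have hDne : ∀ θ, Dk t θ ≠ 0 := fun θ => ne_of_gt (Dk_pos h0 h1 θ)
  -- J1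
  have hJ1 : ∫ θ in (0:ℝ)..π, Real.cos ((1:ℝ) * θ) / Dk t θ = π * t^1 / (1 - t^2) := by
    have hcong : ∀ θ : ℝ, Real.cos ((1:ℝ)*θ) / Dk t θ
        = ((1+t^2)/(2*t)) * (1 / Dk t θ) - (1/(2*t)) * 1 := by
      intro θ
      have hD : Dk t θ = 1 - 2*t*Real.cos θ + t^2 := rfl
      have hD0 : (1 - 2*t*Real.cos θ + t^2) ≠ 0 := hD ▸ hDne θ
      have := hDne θ
      field_simp
      rw [hD]
      ring
    rw [intervalIntegral.integral_congr (fun θ _ => hcong θ)]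
    rw [intervalIntegral.integral_sub ((intInvDk h0 h1 _ continuous_const 0 π).const_mul _)
      (intervalIntegrable_const)]
    rw [intervalIntegral.integral_const_mul, J0 h0 h1]
    simp
    field_simp
    ring
  -- recurrence
  have hrec : ∀ k : ℕ, ∫ θ in (0:ℝ)..π, Real.cos (((k:ℝ)+2) * θ) / Dk t θ
      = ((1+t^2)/t) * (∫ θ in (0:ℝ)..π, Real.cos (((k:ℝ)+1) * θ) / Dk t θ)
        - ∫ θ in (0:ℝ)..π, Real.cos ((k:ℝ) * θ) / Dk t θ := by
    intro k
    have hcong : ∀ θ : ℝ, Real.cos (((k:ℝ)+2)*θ) / Dk t θ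
        = ((1+t^2)/t) * (Real.cos (((k:ℝ)+1)*θ) / Dk t θ)
          - (1/t) * Real.cos (((k:ℝ)+1)*θ) - Real.cos ((k:ℝ)*θ) / Dk t θ := by
      intro θ
      have hD : Dk t θ = 1 - 2*t*Real.cos θ + t^2 := rfl
      have htrig : Real.cos (((k:ℝ)+2)*θ) + Real.cos ((k:ℝ)*θ)
          = 2 * Real.cos (((k:ℝ)+1)*θ) * Real.cos θ := by
        have e1 : ((k:ℝ)+2)*θ = ((k:ℝ)+1)*θ + θ := by ring
        have e2 : ((k:ℝ))*θ = ((k:ℝ)+1)*θ - θ := by ring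
        rw [e1, e2, Real.cos_add, Real.cos_sub]; ring
      have hD0 : (1 - 2*t*Real.cos θ + t^2) ≠ 0 := hD ▸ hDne θ
      have e3 : Real.cos (((k:ℝ)+2)*θ)
          = 2*Real.cos (((k:ℝ)+1)*θ)*Real.cos θ - Real.cos ((k:ℝ)*θ) := by linarith
      rw [e3]
      have := hDne θ
      field_simp
      rw [hD]
      ring
    rw [intervalIntegral.integral_congr (fun θ _ => hcong θ)]
    have i1 : IntervalIntegrable (fun θ => ((1+t^2)/t) * (Real.cos (((k:ℝ)+1)*θ) / Dk t θ)) volume 0 π :=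
      (intInvDk h0 h1 _ (by fun_prop) 0 π).const_mul _
    have i2 : IntervalIntegrable (fun θ => (1/t) * Real.cos (((k:ℝ)+1)*θ)) volume 0 π :=
      ((by fun_prop : Continuous fun θ : ℝ => Real.cos (((k:ℝ)+1)*θ)).intervalIntegrable 0 π).const_mul _
    have i3 : IntervalIntegrable (fun θ => Real.cos ((k:ℝ)*θ) / Dk t θ) volume 0 π :=
      intInvDk h0 h1 _ (by fun_prop) 0 π
    rw [intervalIntegral.integral_sub (i1.sub i2) i3, intervalIntegral.integral_sub i1 i2,
      intervalIntegral.integral_const_mul, intervalIntegral.integral_const_mul,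
      intCos k]
    ring
  -- induction
  suffices H : ∀ k : ℕ, (∫ θ in (0:ℝ)..π, Real.cos ((k:ℝ) * θ) / Dk t θ = π * t^k / (1 - t^2)) ∧
      (∫ θ in (0:ℝ)..π, Real.cos (((k:ℝ)+1) * θ) / Dk t θ = π * t^(k+1) / (1 - t^2)) from (H k).1
  intro k
  induction k with
  | zero =>
    constructor
    · simpa using J0 h0 h1
    · simpa using hJ1
  | succ n ih =>
    refine ⟨by simpa using ih.2, ?_⟩
    have := hrec n
    push_cast
    have e : ((n:ℝ)+1+1) = ((n:ℝ)+2) := by ring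
    rw [e, this, ih.2, ih.1]
    field_simp
    ring

lemma Ik {t : ℝ} (h0 : 0 < t) (h1 : t < 1) (r : ℕ) :
    ∫ θ in (0:ℝ)..π, Real.sin θ * Real.sin (((r:ℝ)+1) * θ) * ((1-t^2) / (Dk t θ)^2)
      = ((r:ℝ)+1) * π * t^r / 2 := by
  have ht2 : (1:ℝ) - t^2 ≠ 0 := by nlinarith
  have ht : t ≠ 0 := ne_of_gt h0
  have hDne : ∀ θ, Dk t θ ≠ 0 := fun θ => ne_of_gt (Dk_pos h0 h1 θ)
  set c : ℝ := (1-t^2) * ((r:ℝ)+1) / (2*t) with hc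
  set H : ℝ → ℝ := fun θ => -((1-t^2)/(2*t)) * (Real.sin (((r:ℝ)+1)*θ) / Dk t θ) with hH
  set H' : ℝ → ℝ := fun θ => -((1-t^2)/(2*t)) *
      ((((r:ℝ)+1) * Real.cos (((r:ℝ)+1)*θ) * Dk t θ - Real.sin (((r:ℝ)+1)*θ) * (2*t*Real.sin θ)) / (Dk t θ)^2)
    with hH'
  have hderiv : ∀ θ ∈ Set.uIcc (0:ℝ) π, HasDerivAt H (H' θ) θ := by
    intro θ _
    have hlin : HasDerivAt (fun θ : ℝ => ((r:ℝ)+1) * θ) ((r:ℝ)+1) θ := by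
      simpa using (hasDerivAt_id θ).const_mul ((r:ℝ)+1)
    have hnum : HasDerivAt (fun θ => Real.sin (((r:ℝ)+1)*θ)) (((r:ℝ)+1) * Real.cos (((r:ℝ)+1)*θ)) θ := by
      simpa [mul_comm] using hlin.sin
    have hden : HasDerivAt (fun θ => Dk t θ) (2*t*Real.sin θ) θ := by
      unfold Dk
      have h1' : HasDerivAt (fun θ : ℝ => 1 - 2*t*Real.cos θ) (2*t*Real.sin θ) θ := by
        have := ((Real.hasDerivAt_cos θ).const_mul (2*t)).const_sub 1
        simpa using this
      simpa using h1'.add_const (t^2)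
    exact ((hnum.div hden (hDne θ)).const_mul _)
  have hcont : Continuous H' := by
    apply Continuous.mul continuous_const
    apply Continuous.div (by fun_prop : Continuous fun θ : ℝ =>
      (((r:ℝ)+1) * Real.cos (((r:ℝ)+1)*θ) * Dk t θ - Real.sin (((r:ℝ)+1)*θ) * (2*t*Real.sin θ)))
      (by fun_prop : Continuous fun θ : ℝ => (Dk t θ)^2)
    exact fun θ => pow_ne_zero 2 (hDne θ)
  have hintH' : ∫ θ in (0:ℝ)..π, H' θ = 0 := by
    rw [intervalIntegral.integral_eq_sub_of_hasDerivAt hderiv (hcont.intervalIntegrable 0 π)]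
    have hs : Real.sin (((r:ℝ)+1)*π) = 0 := by
      have := Real.sin_nat_mul_pi (r+1); push_cast at this; simpa using this
    simp [hH, hs]
  have hcong : ∀ θ : ℝ, Real.sin θ * Real.sin (((r:ℝ)+1) * θ) * ((1-t^2) / (Dk t θ)^2)
      = H' θ + c * (Real.cos (((r:ℝ)+1)*θ) / Dk t θ) := by
    intro θ
    rw [hH', hc]
    have := hDne θ
    field_simp
    ring
  rw [intervalIntegral.integral_congr (fun θ _ => hcong θ)]
  rw [intervalIntegral.integral_add (hcont.intervalIntegrable 0 π)
    ((intInvDk h0 h1 _ (by fun_prop) 0 π).const_mul c)]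
  rw [hintH', intervalIntegral.integral_const_mul]
  have hJ : ∫ θ in (0:ℝ)..π, Real.cos (((r:ℝ)+1) * θ) / Dk t θ = π * t^(r+1) / (1 - t^2) := by
    have := Jk h0 h1 (r+1); push_cast at this; simpa using this
  rw [hJ, hc]
  field_simp
  ring

/-- For a prime `p` and `r ≥ 0`, the integral of `X_r` against the measure
`(p-1)/(√p + 1/√p - x)² dμ_∞(x)` (the measure `η_p^χ` when `χ(p) = 1`)
equals `(r+1) p^{-r/2}`. -/
theorem integral_chebX_etaPlus (p : ℕ) (hp : p.Prime) (r : ℕ) :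
    ∫ x, chebX r x * (((p : ℝ) - 1) / (Real.sqrt p + 1 / Real.sqrt p - x) ^ 2) ∂satoTate =
      ((r : ℝ) + 1) * (p : ℝ) ^ (-(r : ℝ) / 2) := by
  have hp2 : (2:ℝ) ≤ p := by exact_mod_cast hp.two_le
  set s : ℝ := Real.sqrt p with hs
  have hs1 : 1 < s := by
    rw [hs]
    have : (1:ℝ) < p := by linarith
    nlinarith [Real.sq_sqrt (by positivity : (0:ℝ) ≤ (p:ℝ)), Real.sqrt_nonneg (p:ℝ)]
  have hs0 : 0 < s := by linarith
  set t : ℝ := s⁻¹ with htdef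
  have h0 : 0 < t := by positivity
  have h1 : t < 1 := by rw [htdef]; exact inv_lt_one_of_one_lt₀ hs1
  have hsp : s^2 = p := Real.sq_sqrt (by positivity)
  set c : ℝ := s + 1/s with hc
  have hc2 : 2 < c := by
    have he : s + 1/s - 2 = (s-1)^2/s := by field_simp; ring
    have hpos : 0 < (s-1)^2/s := div_pos (by nlinarith) hs0
    rw [hc]; linarith
  set w : ℝ → ℝ := fun x => (1 / Real.pi) * Real.sqrt (1 - x ^ 2 / 4) with hw
  have hwnn : ∀ x, 0 ≤ w x := fun x => by rw [hw]; positivity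
  have hwcont : Continuous w := by rw [hw]; fun_prop
  set g0 : ℝ → ℝ := fun x => chebX r x * (((p : ℝ) - 1) / (c - x) ^ 2) with hg0
  -- Step A: unfold withDensity
  have stepA : (∫ x, g0 x ∂satoTate) = ∫ x, w x * g0 x := by
    rw [show satoTate = volume.withDensity (fun x => ((w x).toNNReal : ℝ≥0∞)) from rfl]
    rw [integral_withDensity_eq_integral_smul (hwcont.measurable.real_toNNReal) g0]
    refine integral_congr_ae (Filter.Eventually.of_forall fun x => ?_)
    simp [NNReal.smul_def, Real.coe_toNNReal _ (hwnn x)]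
  -- Step B: restrict to [-2,2]
  have hzero : ∀ x ∉ Set.Icc (-2:ℝ) 2, w x * g0 x = 0 := by
    intro x hx
    simp only [Set.mem_Icc, not_and_or, not_le] at hx
    have hneg : 1 - x^2/4 ≤ 0 := by rcases hx with h | h <;> nlinarith
    have : Real.sqrt (1 - x^2/4) = 0 := Real.sqrt_eq_zero_of_nonpos hneg
    rw [hw]; simp [this]
  have stepB : ∫ x, w x * g0 x = ∫ x in (-2:ℝ)..2, w x * g0 x := by
    rw [← MeasureTheory.setIntegral_eq_integral_of_forall_compl_eq_zero hzero,
      MeasureTheory.integral_Icc_eq_integral_Ioc,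
      intervalIntegral.integral_of_le (by norm_num : (-2:ℝ) ≤ 2)]
  -- continuity of the full integrand on [-2,2]
  have hgcont : ContinuousOn (fun x => w x * g0 x) (Set.Icc (-2:ℝ) 2) := by
    apply ContinuousOn.mul hwcont.continuousOn
    apply ContinuousOn.mul
    · exact ((Polynomial.Chebyshev.U ℝ (r:ℤ)).continuous_aeval.comp (by fun_prop)).continuousOn
    · apply ContinuousOn.div continuousOn_const (by fun_prop)
      intro x hx
      have : x ≤ 2 := hx.2
      have : c - x > 0 := by linarith
      positivity
  -- Step C: substitution x = 2 cos θ
  have hder : ∀ θ ∈ Set.uIcc π (0:ℝ), HasDerivAt (fun θ => 2*Real.cos θ) (-(2*Real.sin θ)) θ := by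
    intro θ _
    have := (Real.hasDerivAt_cos θ).const_mul 2
    simpa [mul_comm] using this
  have himg : (fun θ => 2*Real.cos θ) '' (Set.uIcc π 0) ⊆ Set.Icc (-2:ℝ) 2 := by
    rintro x ⟨θ, _, rfl⟩
    simp only [Set.mem_Icc]
    constructor
    · nlinarith [Real.neg_one_le_cos θ]
    · nlinarith [Real.cos_le_one θ]
  have stepC := intervalIntegral.integral_comp_smul_deriv' hder (by fun_prop)
    (hgcont.mono himg)
  simp only [Real.cos_pi, Real.cos_zero, mul_one] at stepC
  have h2 : (2:ℝ)*(-1) = -2 := by norm_num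
  rw [h2] at stepC
  -- stepC : ∫ θ in π..0, -(2 sin θ) • (w∘f * g0∘f) = ∫ x in -2..2, w x * g0 x
  rw [stepA, stepB, ← stepC, intervalIntegral.integral_symm]
  rw [← intervalIntegral.integral_neg]
  simp only [Function.comp_apply]
  -- pointwise identity on [0,π]
  have key : ∀ θ ∈ Set.uIcc (0:ℝ) π,
      (fun θ => -((-(2*Real.sin θ)) • (fun x => w x * g0 x) (2*Real.cos θ))) θ
      = (fun θ => (2/π) * (Real.sin θ * Real.sin (((r:ℝ)+1) * θ) * ((1-t^2) / (Dk t θ)^2))) θ := by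
    intro θ hθ
    rw [Set.uIcc_of_le Real.pi_nonneg] at hθ
    have hsin : 0 ≤ Real.sin θ := Real.sin_nonneg_of_nonneg_of_le_pi hθ.1 hθ.2
    have hwv : w (2*Real.cos θ) = (1/π) * Real.sin θ := by
      rw [hw]
      have : 1 - (2*Real.cos θ)^2/4 = Real.sin θ^2 := by
        have := Real.sin_sq_add_cos_sq θ; nlinarith
      simp only [this, Real.sqrt_sq_eq_abs, abs_of_nonneg hsin]
    have hDpos : 0 < Dk t θ := Dk_pos h0 h1 θ
    have hfrac : ((p:ℝ)-1) / (c - 2*Real.cos θ)^2 = (1-t^2) / (Dk t θ)^2 := by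
      have hcd : c - 2*Real.cos θ = (Dk t θ) * s := by
        rw [hc, htdef]; unfold Dk; field_simp; ring
      rw [hcd, ← hsp, htdef]
      rw [div_eq_div_iff (by positivity) (by positivity)]
      field_simp
    have hU : (Polynomial.Chebyshev.U ℝ (r:ℤ)).eval (Real.cos θ) * Real.sin θ
        = Real.sin (((r:ℝ)+1) * θ) := by
      have := Polynomial.Chebyshev.U_real_cos θ (r:ℤ)
      push_cast at this
      exact this
    simp only [smul_eq_mul, hg0]
    rw [hwv]
    have hcheb : chebX r (2*Real.cos θ) = (Polynomial.Chebyshev.U ℝ (r:ℤ)).eval (Real.cos θ) := by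
      unfold chebX; norm_num
    rw [hcheb, hfrac]
    linear_combination (2/π * ((1-t^2) / (Dk t θ)^2) * Real.sin θ) * hU
  rw [intervalIntegral.integral_congr key, intervalIntegral.integral_const_mul, Ik h0 h1 r]
  have hrpow : (p:ℝ) ^ (-(r:ℝ) / 2) = t ^ r := by
    rw [htdef, hs, Real.sqrt_eq_rpow, ← Real.rpow_neg_one ((p:ℝ) ^ ((1:ℝ)/2)),
      ← Real.rpow_mul (by positivity), ← Real.rpow_natCast ((p:ℝ) ^ ((1:ℝ)/2 * -1)) r,
      ← Real.rpow_mul (by positivity)]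
    congr 1
    ring
  rw [hrpow]
  have hpine : (π:ℝ) ≠ 0 := Real.pi_ne_zero
  field_simp
end

section
/- Let p be a prime and r ≥ 0 an integer. Then ∫_ℝ X_r(x) · (p + 1)/((√p + 1/√p)² − x²) dμ_∞(x) equals p^{−r/2} if r is even, and equals 0 if r is odd. -/
open MeasureTheory

namespace SatoTateAux

open Real intervalIntegral

noncomputable def H2 (q θ : ℝ) : ℝ :=
  q / (q^2 - 1) * (θ + Real.arctan (q⁻¹ * Real.sin (2*θ) / (1 - q⁻¹ * Real.cos (2*θ))))

lemma denom_pos' {q : ℝ} (hq : 1 < q) {c : ℝ} (hc : c ≤ 1) : 0 < q + q⁻¹ - 2 * c := by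
  have hq0 : 0 < q := lt_trans one_pos hq
  have h1 : q * q⁻¹ = 1 := mul_inv_cancel₀ hq0.ne'
  have h3 : 0 < q⁻¹ := inv_pos.mpr hq0
  nlinarith [mul_pos h3 (mul_pos (sub_pos.mpr hq) (sub_pos.mpr hq))]

lemma denom_pos {q : ℝ} (hq : 1 < q) (θ : ℝ) : 0 < q + q⁻¹ - 2 * Real.cos (2*θ) :=
  denom_pos' hq (Real.cos_le_one _)

lemma vpos {q : ℝ} (hq : 1 < q) (θ : ℝ) : 0 < 1 - q⁻¹ * Real.cos (2*θ) := by
  have hq0 : 0 < q := lt_trans one_pos hq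
  have hs : q⁻¹ < 1 := by rw [inv_lt_one_iff₀]; exact Or.inr hq
  have h2 : Real.cos (2*θ) ≤ 1 := Real.cos_le_one _
  have h2' : -1 ≤ Real.cos (2*θ) := Real.neg_one_le_cos _
  have h3 : 0 < q⁻¹ := inv_pos.mpr hq0
  nlinarith

lemma arctan_deriv_alg {q : ℝ} (hq : 1 < q) (c s : ℝ) (hpy : s^2 + c^2 = 1)
    (hv : 0 < 1 - q⁻¹*c) (hd : 0 < q + q⁻¹ - 2*c) :
    q / (q^2 - 1) * (1 + 1 / (1 + (q⁻¹ * s / (1 - q⁻¹ * c)) ^ 2) *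
      ((q⁻¹ * (c * 2) * (1 - q⁻¹ * c) - q⁻¹ * s * -(q⁻¹ * (-s * 2))) / (1 - q⁻¹ * c) ^ 2))
    = (q + q⁻¹ - 2 * c)⁻¹ := by
  have hq0 : 0 < q := lt_trans one_pos hq
  have hq2 : q^2 - 1 ≠ 0 := by nlinarith
  have hvne : 1 - q⁻¹*c ≠ 0 := hv.ne'
  have hqq : q * q⁻¹ = 1 := mul_inv_cancel₀ hq0.ne'
  have hw : 0 < 1 - 2*q⁻¹*c + q⁻¹^2 := by
    have h3 : 0 < q⁻¹ := inv_pos.mpr hq0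
    nlinarith [mul_pos h3 hd]
  have e1 : q⁻¹ * (c * 2) * (1 - q⁻¹ * c) - q⁻¹ * s * -(q⁻¹ * (-s * 2))
      = 2*q⁻¹*c - 2*q⁻¹^2 := by linear_combination (-(2:ℝ)*q⁻¹^2) * hpy
  have e2 : 1 + (q⁻¹ * s / (1 - q⁻¹ * c)) ^ 2 = (1 - 2*q⁻¹*c + q⁻¹^2)/(1 - q⁻¹*c)^2 := by
    rw [div_pow]
    nth_rewrite 1 [← div_self (pow_ne_zero 2 hvne)]
    rw [← add_div]
    congr 1
    linear_combination (q⁻¹^2) * hpy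
  rw [e1, e2]
  have e3 : 1 / ((1 - 2*q⁻¹*c + q⁻¹^2)/(1 - q⁻¹*c)^2) * ((2*q⁻¹*c - 2*q⁻¹^2)/(1 - q⁻¹*c)^2)
      = (2*q⁻¹*c - 2*q⁻¹^2)/(1 - 2*q⁻¹*c + q⁻¹^2) := by
    rw [one_div_div, div_mul_div_comm, mul_comm, mul_div_mul_right _ _ (pow_ne_zero 2 hvne)]
  rw [e3]
  have e4 : 1 + (2*q⁻¹*c - 2*q⁻¹^2)/(1 - 2*q⁻¹*c + q⁻¹^2) = (1 - q⁻¹^2)/(1 - 2*q⁻¹*c + q⁻¹^2) := by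
    rw [add_div' _ _ _ hw.ne']
    ring_nf
  rw [e4]
  have hs1 : q⁻¹ < 1 := by rw [inv_lt_one_iff₀]; exact Or.inr hq
  have h1t : 0 < 1 - q⁻¹^2 := by nlinarith [inv_pos.mpr hq0]
  rw [div_mul_div_comm, eq_comm, inv_eq_iff_eq_inv, inv_div,
    eq_div_iff (by positivity : q * (1 - q⁻¹^2) ≠ 0)]
  linear_combination (-1 - 2*q*q⁻¹ - q⁻¹^2 + 2*q⁻¹*c + 2*q*c) * hqq

lemma hasDerivAt_H2 {q : ℝ} (hq : 1 < q) (θ : ℝ) :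
    HasDerivAt (H2 q) ((q + q⁻¹ - 2 * Real.cos (2*θ))⁻¹) θ := by
  have hv := vpos hq θ
  have h2θ : HasDerivAt (fun θ : ℝ => 2*θ) 2 θ := by
    simpa using (hasDerivAt_id θ).const_mul (2:ℝ)
  have hsin : HasDerivAt (fun θ => Real.sin (2*θ)) (Real.cos (2*θ) * 2) θ :=
    (Real.hasDerivAt_sin (2*θ)).comp θ h2θ
  have hcos : HasDerivAt (fun θ => Real.cos (2*θ)) (-Real.sin (2*θ) * 2) θ :=
    (Real.hasDerivAt_cos (2*θ)).comp θ h2θ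
  have hu : HasDerivAt (fun θ => q⁻¹ * Real.sin (2*θ)) (q⁻¹ * (Real.cos (2*θ) * 2)) θ :=
    hsin.const_mul _
  have hvd : HasDerivAt (fun θ => 1 - q⁻¹ * Real.cos (2*θ)) (-(q⁻¹ * (-Real.sin (2*θ) * 2))) θ :=
    (hcos.const_mul q⁻¹).const_sub 1
  have hquot := hu.div hvd hv.ne'
  have harc := hquot.arctan
  have hfull := ((hasDerivAt_id θ).add harc).const_mul (q / (q^2 - 1))
  have halg := arctan_deriv_alg hq (Real.cos (2*θ)) (Real.sin (2*θ))
    (Real.sin_sq_add_cos_sq (2*θ)) hv (denom_pos hq θ)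
  rw [← halg]
  exact hfull

noncomputable def Chat (q : ℝ) (k : ℕ) : ℝ :=
  ∫ θ in (0:ℝ)..π, Real.cos (2*(k:ℝ)*θ) / (q + q⁻¹ - 2*Real.cos (2*θ))

lemma cont_denom {q : ℝ} (hq : 1 < q) :
    Continuous fun θ : ℝ => q + q⁻¹ - 2*Real.cos (2*θ) := by
  continuity

lemma cont_div_denom {q : ℝ} (hq : 1 < q) {f : ℝ → ℝ} (hf : Continuous f) :
    Continuous fun θ => f θ / (q + q⁻¹ - 2*Real.cos (2*θ)) :=
  hf.div (cont_denom hq) (fun θ => (denom_pos hq θ).ne')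

lemma Chat_zero {q : ℝ} (hq : 1 < q) : Chat q 0 = π * q / (q^2 - 1) := by
  unfold Chat
  rw [intervalIntegral.integral_congr
    (g := fun θ => (q + q⁻¹ - 2*Real.cos (2*θ))⁻¹) (fun θ _ => by norm_num)]
  rw [intervalIntegral.integral_eq_sub_of_hasDerivAt (fun θ _ => hasDerivAt_H2 hq θ)
    (((cont_denom hq).inv₀ (fun θ => (denom_pos hq θ).ne')).intervalIntegrable _ _)]
  simp [H2, Real.sin_two_pi, Real.cos_two_pi, Real.arctan_zero]
  ring

lemma integral_cos_mul (c : ℝ) (hc : c ≠ 0) :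
    ∫ θ in (0:ℝ)..π, Real.cos (c*θ) = Real.sin (c*π) / c := by
  have h : ∀ θ ∈ Set.uIcc (0:ℝ) π, HasDerivAt (fun θ => Real.sin (c*θ) / c) (Real.cos (c*θ)) θ := by
    intro θ _
    have h1 : HasDerivAt (fun θ : ℝ => c*θ) c θ := by
      simpa using (hasDerivAt_id θ).const_mul c
    have := ((Real.hasDerivAt_sin (c*θ)).comp θ h1).div_const c
    simpa [mul_comm, mul_div_assoc, mul_div_cancel_left₀ _ hc] using this
  rw [intervalIntegral.integral_eq_sub_of_hasDerivAt h
    ((Real.continuous_cos.comp (continuous_const.mul continuous_id)).intervalIntegrable _ _)]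
  simp

lemma integral_cos_even_mul (m : ℕ) (hm : 0 < m) :
    ∫ θ in (0:ℝ)..π, Real.cos (2*(m:ℝ)*θ) = 0 := by
  rw [integral_cos_mul (2*(m:ℝ)) (by positivity)]
  have : Real.sin (2*(m:ℝ)*π) = 0 := by
    have := Real.sin_nat_mul_pi (2*m)
    push_cast at this
    linarith
  rw [this, zero_div]

lemma intInt_div_denom {q : ℝ} (hq : 1 < q) {f : ℝ → ℝ} (hf : Continuous f) :
    IntervalIntegrable (fun θ => f θ / (q + q⁻¹ - 2*Real.cos (2*θ))) MeasureTheory.volume 0 π :=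
  (cont_div_denom hq hf).intervalIntegrable _ _

lemma cont_cos_mul (c : ℝ) : Continuous fun θ : ℝ => Real.cos (c*θ) :=
  Real.continuous_cos.comp (continuous_const.mul continuous_id)

lemma Chat_one {q : ℝ} (hq : 1 < q) : 2 * Chat q 1 = (q + q⁻¹) * Chat q 0 - π := by
  have key : ∀ θ ∈ Set.uIcc (0:ℝ) π,
      (q + q⁻¹) * (Real.cos (2*((0:ℕ):ℝ)*θ) / (q + q⁻¹ - 2*Real.cos (2*θ)))
      - 2 * (Real.cos (2*((1:ℕ):ℝ)*θ) / (q + q⁻¹ - 2*Real.cos (2*θ))) = 1 := by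
    intro θ _
    have hD := (denom_pos hq θ).ne'
    rw [← mul_div_assoc, ← mul_div_assoc, ← sub_div, div_eq_one_iff_eq hD]
    norm_num
  have h1 : ∫ θ in (0:ℝ)..π, ((q + q⁻¹) * (Real.cos (2*((0:ℕ):ℝ)*θ) / (q + q⁻¹ - 2*Real.cos (2*θ)))
      - 2 * (Real.cos (2*((1:ℕ):ℝ)*θ) / (q + q⁻¹ - 2*Real.cos (2*θ)))) = π := by
    rw [intervalIntegral.integral_congr (g := fun _ => (1:ℝ)) key]
    simp
  rw [intervalIntegral.integral_sub ((intInt_div_denom hq (cont_cos_mul _)).const_mul _)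
      ((intInt_div_denom hq (cont_cos_mul _)).const_mul _),
    intervalIntegral.integral_const_mul, intervalIntegral.integral_const_mul] at h1
  unfold Chat
  linarith [h1]

lemma Chat_rec {q : ℝ} (hq : 1 < q) (k : ℕ) :
    Chat q (k+2) = (q + q⁻¹) * Chat q (k+1) - Chat q k := by
  have hcc : ∀ θ : ℝ, Real.cos (2*((k:ℝ)+2)*θ) + Real.cos (2*(k:ℝ)*θ)
      = 2 * Real.cos (2*θ) * Real.cos (2*((k:ℝ)+1)*θ) := by
    intro θ
    have h1 := Real.cos_add (2*((k:ℝ)+1)*θ) (2*θ)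
    have h2 := Real.cos_sub (2*((k:ℝ)+1)*θ) (2*θ)
    have e1 : 2*((k:ℝ)+1)*θ + 2*θ = 2*((k:ℝ)+2)*θ := by ring
    have e2 : 2*((k:ℝ)+1)*θ - 2*θ = 2*(k:ℝ)*θ := by ring
    rw [e1] at h1; rw [e2] at h2
    linear_combination h1 + h2
  have key : ∀ θ ∈ Set.uIcc (0:ℝ) π,
      Real.cos (2*((k:ℝ)+2)*θ) / (q + q⁻¹ - 2*Real.cos (2*θ))
      = (q + q⁻¹) * (Real.cos (2*((k:ℝ)+1)*θ) / (q + q⁻¹ - 2*Real.cos (2*θ)))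
        - Real.cos (2*(k:ℝ)*θ) / (q + q⁻¹ - 2*Real.cos (2*θ))
        - Real.cos (2*((k:ℝ)+1)*θ) := by
    intro θ _
    have hD := (denom_pos hq θ).ne'
    have num : Real.cos (2*((k:ℝ)+2)*θ)
        = (q + q⁻¹) * Real.cos (2*((k:ℝ)+1)*θ) - Real.cos (2*(k:ℝ)*θ)
          - Real.cos (2*((k:ℝ)+1)*θ) * (q + q⁻¹ - 2*Real.cos (2*θ)) := by
      linear_combination hcc θ
    rw [num, sub_div, sub_div, mul_div_assoc, mul_div_cancel_right₀ _ hD]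
  have h1 : Chat q (k+2) = ∫ θ in (0:ℝ)..π,
      ((q + q⁻¹) * (Real.cos (2*((k:ℝ)+1)*θ) / (q + q⁻¹ - 2*Real.cos (2*θ)))
        - Real.cos (2*(k:ℝ)*θ) / (q + q⁻¹ - 2*Real.cos (2*θ))
        - Real.cos (2*((k:ℝ)+1)*θ)) := by
    unfold Chat
    push_cast
    exact intervalIntegral.integral_congr key
  rw [h1, intervalIntegral.integral_sub, intervalIntegral.integral_sub,
    intervalIntegral.integral_const_mul]
  · have hz : ∫ θ in (0:ℝ)..π, Real.cos (2*((k:ℝ)+1)*θ) = 0 := by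
      have := integral_cos_even_mul (k+1) (Nat.succ_pos k)
      push_cast at this
      exact this
    unfold Chat
    push_cast
    rw [hz]
    ring
  · exact (intInt_div_denom hq (cont_cos_mul _)).const_mul _
  · exact intInt_div_denom hq (cont_cos_mul _)
  · exact ((intInt_div_denom hq (cont_cos_mul _)).const_mul _).sub
      (intInt_div_denom hq (cont_cos_mul _))
  · exact (cont_cos_mul _).intervalIntegrable _ _

lemma Chat_formula {q : ℝ} (hq : 1 < q) (k : ℕ) :
    Chat q k = π * q / (q^2 - 1) * (q⁻¹)^k := by
  have hq0 : 0 < q := lt_trans one_pos hq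
  have hq2 : q^2 - 1 ≠ 0 := by nlinarith
  have hqq : q * q⁻¹ = 1 := mul_inv_cancel₀ hq0.ne'
  have key : ∀ k : ℕ, Chat q k = π * q / (q^2 - 1) * (q⁻¹)^k ∧
      Chat q (k+1) = π * q / (q^2 - 1) * (q⁻¹)^(k+1) := by
    intro k
    induction k with
    | zero =>
      constructor
      · simpa using Chat_zero hq
      · have h1 := Chat_one hq
        rw [Chat_zero hq] at h1
        have : Chat q 1 = ((q + q⁻¹) * (π * q / (q^2 - 1)) - π) / 2 := by linarith
        rw [this]
        simp only [zero_add, pow_one]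
        field_simp
        ring
    | succ n ih =>
      refine ⟨ih.2, ?_⟩
      rw [Chat_rec hq n, ih.1, ih.2]
      have ht : (q + q⁻¹) * q⁻¹ - 1 = q⁻¹ * q⁻¹ := by
        field_simp
        ring
      simp only [pow_succ]
      linear_combination (π * q / (q^2-1) * (q⁻¹)^n) * ht
  exact (key k).1

noncomputable def Gint (q : ℝ) (m : ℕ) : ℝ :=
  ∫ θ in (0:ℝ)..π, Real.sin ((m:ℝ)*θ) * Real.sin θ / (q + q⁻¹ - 2*Real.cos (2*θ))

lemma Gint_even {q : ℝ} (hq : 1 < q) (m : ℕ) (hm : Even m) : Gint q m = 0 := by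
  unfold Gint
  have hrefl := intervalIntegral.integral_comp_sub_left (a := (0:ℝ)) (b := π)
    (fun θ => Real.sin ((m:ℝ)*θ) * Real.sin θ / (q + q⁻¹ - 2*Real.cos (2*θ))) π
  simp only [sub_self, sub_zero] at hrefl
  have hpt : ∀ θ : ℝ,
      Real.sin ((m:ℝ)*(π - θ)) * Real.sin (π - θ) / (q + q⁻¹ - 2*Real.cos (2*(π - θ)))
      = -(Real.sin ((m:ℝ)*θ) * Real.sin θ / (q + q⁻¹ - 2*Real.cos (2*θ))) := by
    intro θ
    obtain ⟨t, rfl⟩ := hm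
    have h1 : Real.sin (((t+t:ℕ):ℝ)*(π - θ)) = -Real.sin (((t+t:ℕ):ℝ)*θ) := by
      push_cast
      have : ((t:ℝ)+t)*(π - θ) = t*(2*π) - ((t:ℝ)+t)*θ := by ring
      rw [this, Real.sin_sub, Real.cos_nat_mul_two_pi]
      have h0 : (t:ℝ)*(2*π) = ((2*t:ℕ):ℝ)*π := by push_cast; ring
      rw [h0, Real.sin_nat_mul_pi]
      ring
    have h2 : Real.cos (2*(π - θ)) = Real.cos (2*θ) := by
      have : 2*(π - θ) = 1*(2*π) - 2*θ := by ring
      rw [this]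
      exact_mod_cast Real.cos_nat_mul_two_pi_sub (2*θ) 1
    rw [h1, h2, Real.sin_pi_sub]
    ring
  rw [intervalIntegral.integral_congr (g := fun θ =>
      -(Real.sin ((m:ℝ)*θ) * Real.sin θ / (q + q⁻¹ - 2*Real.cos (2*θ)))) (fun θ _ => hpt θ)] at hrefl
  rw [intervalIntegral.integral_neg] at hrefl
  linarith

lemma Gint_odd {q : ℝ} (hq : 1 < q) (j : ℕ) :
    Gint q (2*j+1) = π / (2*(q+1)) * (q⁻¹)^j := by
  have hq0 : 0 < q := lt_trans one_pos hq
  have key : ∀ θ ∈ Set.uIcc (0:ℝ) π,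
      Real.sin (((2*j+1:ℕ):ℝ)*θ) * Real.sin θ / (q + q⁻¹ - 2*Real.cos (2*θ))
      = (Real.cos (2*(j:ℝ)*θ) / (q + q⁻¹ - 2*Real.cos (2*θ))
         - Real.cos (2*((j+1:ℕ):ℝ)*θ) / (q + q⁻¹ - 2*Real.cos (2*θ))) / 2 := by
    intro θ _
    have hD := (denom_pos hq θ).ne'
    have hnum : Real.sin (((2*j+1:ℕ):ℝ)*θ) * Real.sin θ
        = (Real.cos (2*(j:ℝ)*θ) - Real.cos (2*((j+1:ℕ):ℝ)*θ)) / 2 := by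
      have h1 := Real.cos_sub (((2*j+1:ℕ):ℝ)*θ) θ
      have h2 := Real.cos_add (((2*j+1:ℕ):ℝ)*θ) θ
      have e1 : ((2*j+1:ℕ):ℝ)*θ - θ = 2*(j:ℝ)*θ := by push_cast; ring
      have e2 : ((2*j+1:ℕ):ℝ)*θ + θ = 2*((j+1:ℕ):ℝ)*θ := by push_cast; ring
      rw [e1] at h1; rw [e2] at h2
      have hpy := Real.sin_sq_add_cos_sq θ
      linear_combination (h2 - h1) / 2
    rw [hnum, ← sub_div, div_div, div_div]
    ring_nf
  unfold Gint
  rw [intervalIntegral.integral_congr key]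
  have hInt1 := intInt_div_denom hq (cont_cos_mul (2*(j:ℝ)))
  have hInt2 := intInt_div_denom hq (cont_cos_mul (2*((j+1:ℕ):ℝ)))
  rw [intervalIntegral.integral_div, intervalIntegral.integral_sub hInt1 hInt2]
  have hc1 : (∫ θ in (0:ℝ)..π, Real.cos (2*(j:ℝ)*θ) / (q + q⁻¹ - 2*Real.cos (2*θ))) = Chat q j := rfl
  have hc2 : (∫ θ in (0:ℝ)..π, Real.cos (2*((j+1:ℕ):ℝ)*θ) / (q + q⁻¹ - 2*Real.cos (2*θ)))
      = Chat q (j+1) := rfl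
  rw [hc1, hc2, Chat_formula hq j, Chat_formula hq (j+1)]
  have hq2 : q^2 - 1 ≠ 0 := by nlinarith
  have hq1 : q + 1 ≠ 0 := by positivity
  rw [pow_succ]
  have hqq : q * q⁻¹ = 1 := mul_inv_cancel₀ hq0.ne'
  have ht : (π * q / (q^2-1) - π * q / (q^2-1) * q⁻¹) / 2 = π / (2*(q+1)) := by
    field_simp
    ring
  linear_combination (q⁻¹)^j * ht

end SatoTateAux

open SatoTateAux Real in
/-- For a prime `p` and `r ≥ 0`, the integral of `X_r` against the Plancherel
measure `(p+1)/((√p + 1/√p)² - x²) dμ_∞(x)` (the measure `η_p^χ` when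
`χ(p) = -1`) equals `p^{-r/2}` for `r` even and `0` for `r` odd. -/
theorem integral_chebX_plancherel (p : ℕ) (hp : p.Prime) (r : ℕ) :
    ∫ x, chebX r x * (((p : ℝ) + 1) / ((Real.sqrt p + 1 / Real.sqrt p) ^ 2 - x ^ 2)) ∂satoTate =
      if Even r then (p : ℝ) ^ (-(r : ℝ) / 2) else 0 := by
  set q : ℝ := (p : ℝ) with hqdef
  have hq : 1 < q := by rw [hqdef]; exact_mod_cast hp.one_lt
  have hq0 : 0 < q := lt_trans one_pos hq
  set w : ℝ → ℝ := fun x => (1 / Real.pi) * Real.sqrt (1 - x ^ 2 / 4) with hwdef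
  have hwcont : Continuous w := by
    apply Continuous.mul continuous_const
    exact Real.continuous_sqrt.comp (by continuity)
  have hwnn : ∀ x, 0 ≤ w x := fun x =>
    mul_nonneg (by positivity) (Real.sqrt_nonneg _)
  set f : ℝ → ℝ := fun x =>
    chebX r x * ((q + 1) / ((Real.sqrt q + 1 / Real.sqrt q) ^ 2 - x ^ 2)) with hfdef
  have hsq : (Real.sqrt q + 1 / Real.sqrt q) ^ 2 = q + q⁻¹ + 2 := by
    have hs0 : (0 : ℝ) < Real.sqrt q := Real.sqrt_pos.mpr hq0
    have h2 : Real.sqrt q ^ 2 = q := Real.sq_sqrt hq0.le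
    field_simp
    rw [h2]; ring
  -- step 1: withDensity
  have step1 : ∫ x, f x ∂satoTate = ∫ x, w x * f x := by
    have hmeas : Measurable fun x => (w x).toNNReal :=
      hwcont.measurable.real_toNNReal
    have : satoTate = volume.withDensity fun x => ((w x).toNNReal : ENNReal) := rfl
    rw [this, integral_withDensity_eq_integral_smul hmeas f]
    congr 1
    ext x
    rw [NNReal.smul_def, Real.coe_toNNReal _ (hwnn x), smul_eq_mul]
  rw [step1]
  -- step 2: restrict to Icc (-2) 2
  have hvanish : ∀ x ∉ Set.Icc (-2:ℝ) 2, w x * f x = 0 := by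
    intro x hx
    have hx' : x < -2 ∨ 2 < x := by
      rcases Set.mem_Icc.not.mp hx |> not_and_or.mp with h | h
      · exact Or.inl (lt_of_not_ge h)
      · exact Or.inr (lt_of_not_ge h)
    have hneg : 1 - x ^ 2 / 4 ≤ 0 := by
      rcases hx' with h | h <;> nlinarith
    have : Real.sqrt (1 - x ^ 2 / 4) = 0 := Real.sqrt_eq_zero_of_nonpos hneg
    simp only [hwdef, this, mul_zero, zero_mul]
  have step2 : ∫ x, w x * f x = ∫ x in (-2:ℝ)..2, w x * f x := by
    rw [intervalIntegral.integral_of_le (by norm_num : (-2:ℝ) ≤ 2),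
      ← MeasureTheory.integral_Icc_eq_integral_Ioc,
      MeasureTheory.setIntegral_eq_integral_of_forall_compl_eq_zero hvanish]
  rw [step2]
  -- step 3: substitution x = 2 cos θ
  have hcheb_cont : Continuous (chebX r) :=
    (Polynomial.Chebyshev.U ℝ (r:ℤ)).continuous.comp (continuous_id.div_const 2)
  have hDpos : ∀ x ∈ Set.Icc (-2:ℝ) 2, 0 < (Real.sqrt q + 1/Real.sqrt q)^2 - x^2 := by
    intro x hx
    rw [hsq]
    have h1 := denom_pos' hq (c := (x^2 - 2)/2) (by nlinarith [hx.1, hx.2])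
    linarith
  have hgcont : ContinuousOn (fun x => w x * f x) (Set.Icc (-2:ℝ) 2) := by
    apply ContinuousOn.mul hwcont.continuousOn
    apply ContinuousOn.mul hcheb_cont.continuousOn
    exact ContinuousOn.div continuousOn_const
      (by fun_prop) (fun x hx => (hDpos x hx).ne')
  have himg : (fun θ => 2*Real.cos θ) '' Set.uIcc (0:ℝ) π ⊆ Set.Icc (-2:ℝ) 2 := by
    rintro y ⟨θ, _, rfl⟩
    simp only [Set.mem_Icc]
    constructor
    · nlinarith [Real.neg_one_le_cos θ]
    · nlinarith [Real.cos_le_one θ]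
  have hderiv : ∀ θ ∈ Set.uIcc (0:ℝ) π,
      HasDerivAt (fun θ => 2*Real.cos θ) (-(2*Real.sin θ)) θ := by
    intro θ _
    have := (Real.hasDerivAt_cos θ).const_mul (2:ℝ)
    rw [show -(2*Real.sin θ) = 2 * -Real.sin θ by ring]
    exact this
  have hsubst := intervalIntegral.integral_comp_smul_deriv' (a := (0:ℝ)) (b := π)
    hderiv (by fun_prop) (hgcont.mono himg)
  rw [Real.cos_zero, Real.cos_pi, mul_one, mul_neg_one,
    intervalIntegral.integral_symm (-2:ℝ) 2] at hsubst
  have h1 : (∫ x in (-2:ℝ)..2, w x * f x)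
      = -∫ x in (0:ℝ)..π, -(2 * Real.sin x) • ((fun x => w x * f x) ∘ fun θ => 2 * Real.cos θ) x := by
    linarith [hsubst]
  have step3 : ∫ x in (-2:ℝ)..2, w x * f x
      = ∫ θ in (0:ℝ)..π, (2*Real.sin θ) * (w (2*Real.cos θ) * f (2*Real.cos θ)) := by
    rw [h1, ← intervalIntegral.integral_neg]
    apply intervalIntegral.integral_congr
    intro θ _
    simp only [Function.comp_apply, smul_eq_mul]
    ring
  rw [step3]
  -- step 4: pointwise identification with Gint integrand
  have key : ∀ θ ∈ Set.uIcc (0:ℝ) π,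
      (2*Real.sin θ) * (w (2*Real.cos θ) * f (2*Real.cos θ))
      = (2*(q+1)/π) * (Real.sin (((r+1:ℕ):ℝ)*θ) * Real.sin θ
          / (q + q⁻¹ - 2*Real.cos (2*θ))) := by
    intro θ hθ
    rw [Set.uIcc_of_le Real.pi_pos.le] at hθ
    have hsinnn : 0 ≤ Real.sin θ := Real.sin_nonneg_of_nonneg_of_le_pi hθ.1 hθ.2
    have esqrt : 1 - (2*Real.cos θ)^2/4 = Real.sin θ^2 := by
      linear_combination -(Real.sin_sq_add_cos_sq θ)
    have echeb : chebX r (2*Real.cos θ) = (Polynomial.Chebyshev.U ℝ (r:ℤ)).eval (Real.cos θ) := by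
      unfold chebX
      norm_num
    have edenom : (Real.sqrt q + 1/Real.sqrt q)^2 - (2*Real.cos θ)^2
        = q + q⁻¹ - 2*Real.cos (2*θ) := by
      rw [hsq, Real.cos_two_mul]
      ring
    have hU : (Polynomial.Chebyshev.U ℝ (r:ℤ)).eval (Real.cos θ) * Real.sin θ
        = Real.sin (((r+1:ℕ):ℝ)*θ) := by
      have h := Polynomial.Chebyshev.U_real_cos θ (r:ℤ)
      push_cast at h ⊢
      exact h
    have hD := (denom_pos hq θ).ne'
    simp only [hwdef, hfdef, esqrt, echeb, edenom,
      Real.sqrt_sq hsinnn]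
    linear_combination (2*(q+1)*Real.sin θ * (π)⁻¹ * (q + q⁻¹ - 2*Real.cos (2*θ))⁻¹) * hU
  rw [intervalIntegral.integral_congr key, intervalIntegral.integral_const_mul]
  have hGint : (∫ θ in (0:ℝ)..π, Real.sin (((r+1:ℕ):ℝ)*θ) * Real.sin θ
      / (q + q⁻¹ - 2*Real.cos (2*θ))) = Gint q (r+1) := rfl
  rw [hGint]
  -- step 5: conclude
  rcases Nat.even_or_odd r with he | ho
  · rw [if_pos he]
    obtain ⟨j, hj⟩ := he
    have hrj : r + 1 = 2*j + 1 := by omega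
    rw [hrj, Gint_odd hq j]
    have hπ : (π:ℝ) ≠ 0 := Real.pi_ne_zero
    have hq1 : q + 1 ≠ 0 := by positivity
    have e1 : 2*(q+1)/π * (π/(2*(q+1)) * (q⁻¹)^j) = (q⁻¹)^j := by
      field_simp
    rw [e1, show (-(r:ℝ)/2) = -(j:ℝ) by rw [hj]; push_cast; ring,
      Real.rpow_neg hq0.le, Real.rpow_natCast, inv_pow]
  · rw [if_neg (Nat.not_even_iff_odd.mpr ho)]
    have : Even (r+1) := Odd.add_one ho
    rw [Gint_even hq _ this, mul_zero]
end

section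
/- Let q be a prime and let a, z be nonzero elements of the p-adic field ℚ_q with a + z ≠ 0. Suppose there exist a unit u of ℤ_q and a nonzero integer t such that q^t·u·a + z ≠ 0 and 2·v(q^t·u·a + z) = 2·v(a + z) + t, where v denotes the additive q-adic valuation on ℚ_q (normalized by v(q) = 1). Then t = 2·v(z) − 2·v(a). -/
variable {q : ℕ} [Fact q.Prime]

private lemma qne : (q : ℚ_[q]) ≠ 0 := by
  exact_mod_cast (Fact.out : q.Prime).ne_zero

private lemma val_inv {x : ℚ_[q]} (hx : x ≠ 0) : x⁻¹.valuation = -x.valuation := by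
  have h := Padic.valuation_mul hx (inv_ne_zero hx)
  rw [mul_inv_cancel₀ hx, Padic.valuation_one] at h
  linarith

private lemma val_pow (n : ℕ) : ((q : ℚ_[q]) ^ n).valuation = n := by
  induction n with
  | zero => simp [Padic.valuation_one]
  | succ k ih =>
      rw [pow_succ, Padic.valuation_mul (pow_ne_zero _ qne) qne, ih, Padic.valuation_p]
      push_cast; ring

private lemma val_zpow (t : ℤ) : ((q : ℚ_[q]) ^ t).valuation = t := by
  rcases t with n | n
  · rw [Int.ofNat_eq_coe, zpow_natCast, val_pow]
  · rw [zpow_negSucc, val_inv (pow_ne_zero _ qne), val_pow, Int.negSucc_eq]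
    push_cast; ring

private lemma val_neg (y : ℚ_[q]) : (-y).valuation = y.valuation := by
  rcases eq_or_ne y 0 with rfl | hy
  · simp
  · have h : (-y) = (-1 : ℚ_[q]) * y := by ring
    rw [h, Padic.valuation_mul (by norm_num) hy]
    have h2 : ((-1 : ℤ) : ℚ_[q]).valuation = 0 := by
      rw [Padic.valuation_intCast]; simp [padicValInt]
    simpa using h2

private lemma val_add_of_lt {x y : ℚ_[q]} (hx : x ≠ 0)
    (h : x.valuation < y.valuation) : (x + y).valuation = x.valuation := by
  have hxy : x + y ≠ 0 := by
    intro he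
    have hy : x = -y := add_eq_zero_iff_eq_neg.mp he
    rw [hy, val_neg] at h
    exact lt_irrefl _ h
  have h1 := Padic.le_valuation_add hxy
  have h2 : x = (x + y) + (-y) := by ring
  have h3 := Padic.le_valuation_add (x := x + y) (y := -y) (by rw [← h2]; exact hx)
  rw [← h2, val_neg] at h3
  rw [min_le_iff] at h3
  omega

private lemma val_unit (u : ℤ_[q]ˣ) : ((u : ℤ_[q]) : ℚ_[q]).valuation = 0 := by
  have h0 : (u : ℤ_[q]) ≠ 0 := u.ne_zero
  have h := PadicInt.norm_eq_zpow_neg_valuation h0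
  rw [PadicInt.norm_units] at h
  have hq1 : (1 : ℝ) < (q : ℝ) := by exact_mod_cast (Fact.out : q.Prime).one_lt
  have hinj := zpow_right_injective₀ (a := (q : ℝ)) (by linarith) (by linarith)
  have h' : (q : ℝ) ^ (0 : ℤ) = (q : ℝ) ^ (-((u : ℤ_[q]).valuation : ℤ)) := by
    rw [zpow_zero]; exact h
  have := hinj h'
  have hv : ((u : ℤ_[q]).valuation : ℤ) = ((u : ℤ_[q]) : ℚ_[q]).valuation := (PadicInt.valuation_coe _).symm
  omega


/-- Let `q` be a prime and `a, z` nonzero `q`-adic numbers with `a + z ≠ 0`.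
If there is a unit `u` of `ℤ_q` and a nonzero integer `t` with
`q^t u a + z ≠ 0` and `2 v(q^t u a + z) = 2 v(a + z) + t` (the integer form of
`v(q^t u a + z) = v(a + z) + t/2`), then `t = 2 v(z) - 2 v(a)`. -/
theorem padic_valuation_shift (q : ℕ) [Fact q.Prime] (a z : ℚ_[q])
    (ha : a ≠ 0) (hz : z ≠ 0) (haz : a + z ≠ 0) (u : ℤ_[q]ˣ) (t : ℤ) (ht : t ≠ 0)
    (hne : (q : ℚ_[q]) ^ t * ((u : ℤ_[q]) : ℚ_[q]) * a + z ≠ 0)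
    (hval : 2 * ((q : ℚ_[q]) ^ t * ((u : ℤ_[q]) : ℚ_[q]) * a + z).valuation
      = 2 * (a + z).valuation + t) :
    t = 2 * z.valuation - 2 * a.valuation := by
  set b : ℚ_[q] := (q : ℚ_[q]) ^ t * ((u : ℤ_[q]) : ℚ_[q]) * a with hb
  have hu0 : ((u : ℤ_[q]) : ℚ_[q]) ≠ 0 := by
    intro h
    exact u.ne_zero (PadicInt.coe_eq_zero.mp h)
  have hb0 : b ≠ 0 := mul_ne_zero (mul_ne_zero (zpow_ne_zero _ qne) hu0) ha
  have hvb : b.valuation = t + a.valuation := by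
    rw [hb, Padic.valuation_mul (mul_ne_zero (zpow_ne_zero _ qne) hu0) ha,
      Padic.valuation_mul (zpow_ne_zero _ qne) hu0, val_zpow, val_unit]
    ring
  rcases lt_trichotomy a.valuation z.valuation with hαζ | hαζ | hαζ
  · have h1 : (a + z).valuation = a.valuation := val_add_of_lt ha hαζ
    rcases lt_trichotomy (t + a.valuation) z.valuation with h2 | h2 | h2
    · have h3 : (b + z).valuation = b.valuation := val_add_of_lt hb0 (by omega)
      omega
    · have h3 := Padic.le_valuation_add hne
      rw [hvb] at h3
      have : min (t + a.valuation) z.valuation = z.valuation := by omega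
      rw [this] at h3
      omega
    · have h3 : (b + z).valuation = z.valuation := by
        rw [add_comm]; exact val_add_of_lt hz (by omega)
      omega
  · have h1 := Padic.le_valuation_add haz
    rcases lt_or_gt_of_ne ht with htn | htp
    · have h3 : (b + z).valuation = b.valuation := val_add_of_lt hb0 (by omega)
      omega
    · have h3 : (b + z).valuation = z.valuation := by
        rw [add_comm]; exact val_add_of_lt hz (by omega)
      omega
  · have h1 : (a + z).valuation = z.valuation := by
      rw [add_comm]; exact val_add_of_lt hz hαζ
    rcases lt_trichotomy (t + a.valuation) z.valuation with h2 | h2 | h2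
    · have h3 : (b + z).valuation = b.valuation := val_add_of_lt hb0 (by omega)
      omega
    · have h3 := Padic.le_valuation_add hne
      rw [hvb] at h3
      have : min (t + a.valuation) z.valuation = z.valuation := by omega
      rw [this] at h3
      omega
    · have h3 : (b + z).valuation = z.valuation := by
        rw [add_comm]; exact val_add_of_lt hz (by omega)
      omega
end

section
/- Let k ≥ 4 be an even integer, let x be a nonzero real number, and let ε ∈ {1, −1}. Then the integral J = ∫_0^∞ a^{k/2−1} / ((a·x + ε·i)^{k/2} · (a + ε·i)^{k/2}) da (a complex-valued integral over the positive real axis, with i the imaginary unit and the exponents k/2 positive integers) converges absolutely and satisfies |J| ≤ (1/(2|x|)) · B(1/2, k/4 − 1/2), where B(x, y) = Γ(x)Γ(y)/Γ(x+y) is the Beta function. -/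
open MeasureTheory Complex

lemma realBeta {a b : ℝ} (ha : 0 < a) (hb : 0 < b) :
    ∫ t in Set.Ioo (0:ℝ) 1, t ^ (a - 1) * (1 - t) ^ (b - 1) =
      Real.Gamma a * Real.Gamma b / Real.Gamma (a + b) := by
  have hG : Real.Gamma (a + b) ≠ 0 := (Real.Gamma_pos_of_pos (by linarith)).ne'
  have h := Complex.Gamma_mul_Gamma_eq_betaIntegral (s := (a:ℂ)) (t := (b:ℂ))
    (by simpa using ha) (by simpa using hb)
  have e : Set.EqOn (fun t : ℝ => (t:ℂ) ^ ((a:ℂ) - 1) * ((1:ℂ) - (t:ℂ)) ^ ((b:ℂ) - 1))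
      (fun t : ℝ => ((t ^ (a - 1) * (1 - t) ^ (b - 1) : ℝ) : ℂ)) (Set.Ioo 0 1) := by
    intro t ht
    have h1 : (0:ℝ) ≤ t := ht.1.le
    have h2 : (0:ℝ) ≤ 1 - t := by linarith [ht.2]
    simp only [Complex.ofReal_mul, Complex.ofReal_cpow h1, Complex.ofReal_cpow h2]
    push_cast
    ring
  have hbeta : Complex.betaIntegral a b =
      ((∫ t in Set.Ioo (0:ℝ) 1, t ^ (a - 1) * (1 - t) ^ (b - 1) : ℝ) : ℂ) := by
    rw [Complex.betaIntegral, intervalIntegral.integral_of_le zero_le_one,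
      MeasureTheory.integral_Ioc_eq_integral_Ioo,
      MeasureTheory.setIntegral_congr_fun measurableSet_Ioo e]
    exact integral_ofReal
  rw [hbeta, Complex.Gamma_ofReal, Complex.Gamma_ofReal, ← Complex.ofReal_add,
    Complex.Gamma_ofReal, ← Complex.ofReal_mul, ← Complex.ofReal_mul] at h
  have h' := Complex.ofReal_injective h
  rw [eq_div_iff hG]
  linarith [h']

lemma integrableH {s : ℝ} (hs : 1 ≤ s) :
    IntegrableOn (fun u : ℝ => (1 + u ^ 2) ^ (-s)) (Set.Ioi 0) volume := by
  have hc : Continuous fun u : ℝ => (1 + u ^ 2) ^ (-s) := by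
    apply Continuous.rpow_const (by continuity)
    intro u; left; positivity
  refine (integrable_inv_one_add_sq.restrict (s := Set.Ioi 0)).mono'
    hc.aestronglyMeasurable.restrict (ae_of_all _ fun u => ?_)
  have hP : (0:ℝ) < 1 + u ^ 2 := by positivity
  rw [Real.norm_eq_abs, _root_.abs_of_nonneg (Real.rpow_nonneg hP.le _)]
  calc (1 + u ^ 2) ^ (-s) ≤ (1 + u ^ 2) ^ (-1 : ℝ) :=
        Real.rpow_le_rpow_of_exponent_le (by nlinarith) (by linarith)
    _ = (1 + u ^ 2)⁻¹ := Real.rpow_neg_one _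

lemma intH {s : ℝ} (hs : 1 ≤ s) :
    ∫ u in Set.Ioi (0:ℝ), (1 + u ^ 2) ^ (-s) =
      1 / 2 * (Real.Gamma (1/2) * Real.Gamma (s - 1/2) / Real.Gamma s) := by
  set ψ : ℝ → ℝ := fun u => (1 + u ^ 2)⁻¹ with hψ
  set ψ' : ℝ → ℝ := fun u => -(2 * u) / (1 + u ^ 2) ^ 2 with hψ'
  have hderiv : ∀ u ∈ Set.Ioi (0:ℝ), HasDerivWithinAt ψ (ψ' u) (Set.Ioi 0) u := by
    intro u _
    have hP : (0:ℝ) < 1 + u ^ 2 := by positivity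
    have h1 : HasDerivAt (fun u : ℝ => 1 + u ^ 2) (2 * u) u := by
      simpa using ((hasDerivAt_pow 2 u).const_add 1)
    exact (h1.inv hP.ne').hasDerivWithinAt
  have hinj : Set.InjOn ψ (Set.Ioi 0) := by
    intro u hu v hv h
    have hPu : (0:ℝ) < 1 + u ^ 2 := by positivity
    have hPv : (0:ℝ) < 1 + v ^ 2 := by positivity
    have h2 : 1 + u ^ 2 = 1 + v ^ 2 := by
      have := congrArg (·⁻¹) h
      simpa [hψ, inv_inv] using this
    have h3 : (u - v) * (u + v) = 0 := by nlinarith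
    rcases mul_eq_zero.mp h3 with h4 | h4
    · linarith
    · simp only [Set.mem_Ioi] at hu hv; linarith
  have himg : ψ '' Set.Ioi 0 = Set.Ioo 0 1 := by
    ext t
    constructor
    · rintro ⟨u, hu, rfl⟩
      simp only [Set.mem_Ioi] at hu
      have hP : (0:ℝ) < 1 + u ^ 2 := by positivity
      refine ⟨by positivity, ?_⟩
      exact inv_lt_one_of_one_lt₀ (by nlinarith)
    · rintro ⟨ht0, ht1⟩
      have htinv : 1 < t⁻¹ := (one_lt_inv₀ ht0).mpr ht1
      refine ⟨Real.sqrt (t⁻¹ - 1), Real.sqrt_pos.mpr (by linarith), ?_⟩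
      simp only [hψ]
      rw [Real.sq_sqrt (by linarith)]
      rw [show 1 + (t⁻¹ - 1) = t⁻¹ by ring, inv_inv]
  have key := integral_image_eq_integral_abs_deriv_smul measurableSet_Ioi hderiv hinj
    (fun t => t ^ (s - 1/2 - 1) * (1 - t) ^ ((1/2:ℝ) - 1))
  rw [himg, realBeta (by linarith) (by norm_num)] at key
  have hcong : ∀ u ∈ Set.Ioi (0:ℝ),
      |ψ' u| • ((ψ u) ^ (s - 1/2 - 1) * (1 - ψ u) ^ ((1/2:ℝ) - 1)) =
        2 * (1 + u ^ 2) ^ (-s) := by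
    intro u hu
    simp only [Set.mem_Ioi] at hu
    have hP : (0:ℝ) < 1 + u ^ 2 := by positivity
    have e0 : |ψ' u| = 2 * u / (1 + u ^ 2) ^ 2 := by
      simp only [hψ']
      rw [abs_div, abs_neg, _root_.abs_of_nonneg (by positivity : (0:ℝ) ≤ 2 * u),
        _root_.abs_of_nonneg (by positivity : (0:ℝ) ≤ (1 + u ^ 2) ^ 2)]
    have e1 : (ψ u) ^ (s - 1/2 - 1) = (1 + u ^ 2) ^ (-(s - 1/2 - 1)) := by
      simp only [hψ]
      rw [Real.inv_rpow hP.le, ← Real.rpow_neg hP.le]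
    have e2 : 1 - ψ u = u ^ 2 / (1 + u ^ 2) := by
      simp only [hψ]; field_simp; ring
    have e3 : (u ^ 2 / (1 + u ^ 2)) ^ ((1/2:ℝ) - 1) =
        u ^ (2 * ((1/2:ℝ) - 1)) / (1 + u ^ 2) ^ ((1/2:ℝ) - 1) := by
      rw [Real.div_rpow (sq_nonneg u) hP.le, ← Real.rpow_natCast u 2,
        ← Real.rpow_mul hu.le]
      norm_num
    have e4 : u ^ (2 * ((1/2:ℝ) - 1)) = u⁻¹ := by
      norm_num
      exact Real.rpow_neg_one u
    rw [e0, e1, e2, e3, e4, smul_eq_mul]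
    have e5 : (1 + u ^ 2) ^ (-s) = (1 + u ^ 2) ^ (-(s - 1/2 - 1)) *
        (((1 + u ^ 2) ^ ((1/2:ℝ) - 1))⁻¹ * ((1 + u ^ 2) ^ (2:ℕ))⁻¹) := by
      rw [← Real.rpow_neg hP.le, ← Real.rpow_natCast (1 + u ^ 2) 2,
        ← Real.rpow_neg hP.le, ← Real.rpow_add hP, ← Real.rpow_add hP]
      congr 1
      push_cast
      ring
    rw [e5]
    have hB : ((1 + u ^ 2) ^ ((1/2:ℝ) - 1)) ≠ 0 := (Real.rpow_pos_of_pos hP _).ne'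
    have hP2 : ((1 + u ^ 2) ^ (2:ℕ)) ≠ 0 := by positivity
    field_simp
  rw [MeasureTheory.setIntegral_congr_fun measurableSet_Ioi hcong,
    MeasureTheory.integral_const_mul] at key
  have hss : s - 1 / 2 + 1 / 2 = s := by ring
  rw [hss] at key
  linear_combination (-1/2 : ℝ) * key

/-- Let `k ≥ 4` be even, `x ≠ 0` real, `ε = ±1`. The integral
`J = ∫_0^∞ a^{k/2-1} / ((a x + ε i)^{k/2} (a + ε i)^{k/2}) da` converges
absolutely and `|J| ≤ (1/(2|x|)) B(1/2, k/4 - 1/2)`. -/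
theorem integral_J_bound (k : ℕ) (hk : 4 ≤ k) (hke : Even k) (x : ℝ) (hx : x ≠ 0)
    (ε : ℝ) (hε : ε = 1 ∨ ε = -1) :
    IntegrableOn (fun a : ℝ => (a : ℂ) ^ (k / 2 - 1) /
        (((a : ℂ) * (x : ℂ) + (ε : ℂ) * I) ^ (k / 2) * ((a : ℂ) + (ε : ℂ) * I) ^ (k / 2)))
      (Set.Ioi 0) volume ∧
    ‖∫ a in Set.Ioi (0 : ℝ), (a : ℂ) ^ (k / 2 - 1) /
        (((a : ℂ) * (x : ℂ) + (ε : ℂ) * I) ^ (k / 2) * ((a : ℂ) + (ε : ℂ) * I) ^ (k / 2))‖ ≤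
      1 / (2 * |x|) *
        (Real.Gamma (1 / 2) * Real.Gamma ((k : ℝ) / 4 - 1 / 2) / Real.Gamma ((k : ℝ) / 4)) := by
  obtain ⟨m, rfl⟩ := hke
  have hm : 2 ≤ m := by omega
  have hm2 : (m + m) / 2 = m := by omega
  have hxa : (0:ℝ) < |x| := abs_pos.mpr hx
  set s : ℝ := (m : ℝ) / 2 with hsdef
  have hs : 1 ≤ s := by
    rw [hsdef]
    have : (2:ℝ) ≤ (m:ℝ) := by exact_mod_cast hm
    linarith
  have hcast : ((m + m : ℕ) : ℝ) / 4 = s := by push_cast; rw [hsdef]; ring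
  rw [hm2, hcast]
  set f : ℝ → ℂ := fun a : ℝ => (a : ℂ) ^ (m - 1) /
      (((a : ℂ) * (x : ℂ) + (ε : ℂ) * I) ^ m * ((a : ℂ) + (ε : ℂ) * I) ^ m) with hfdef
  have hden1 : ∀ a : ℝ, ((a : ℂ) * (x : ℂ) + (ε : ℂ) * I) ≠ 0 := by
    intro a h
    have him := congrArg Complex.im h
    simp at him
    rcases hε with h' | h' <;> rw [h'] at him <;> norm_num at him
  have hden2 : ∀ a : ℝ, ((a : ℂ) + (ε : ℂ) * I) ≠ 0 := by
    intro a h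
    have him := congrArg Complex.im h
    simp at him
    rcases hε with h' | h' <;> rw [h'] at him <;> norm_num at him
  have hcont : Continuous f := by
    apply Continuous.div
    · fun_prop
    · fun_prop
    · intro a
      exact mul_ne_zero (pow_ne_zero _ (hden1 a)) (pow_ne_zero _ (hden2 a))
  set g : ℝ → ℝ := fun a : ℝ => (1 + (|x| * a) ^ 2) ^ (-s) with hgdef
  have hnorm : ∀ a ∈ Set.Ioi (0:ℝ), ‖f a‖ ≤ g a := by
    intro a ha
    simp only [Set.mem_Ioi] at ha
    have heps : ε ^ 2 = 1 := by rcases hε with h' | h' <;> rw [h'] <;> norm_num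
    have hA : ‖(a : ℂ) * (x : ℂ) + (ε : ℂ) * I‖ = Real.sqrt ((a * x) ^ 2 + 1) := by
      rw [show (a : ℂ) * (x : ℂ) + (ε : ℂ) * I = ((a * x : ℝ) : ℂ) + (ε : ℝ) * I by
        push_cast; ring, Complex.norm_add_mul_I, heps]
    have hB : ‖(a : ℂ) + (ε : ℂ) * I‖ = Real.sqrt (a ^ 2 + 1) := by
      rw [show (a : ℂ) + (ε : ℂ) * I = ((a : ℝ) : ℂ) + (ε : ℝ) * I by push_cast; ring,
        Complex.norm_add_mul_I, heps]
    have hnf : ‖f a‖ = a ^ (m - 1) /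
        (Real.sqrt ((a * x) ^ 2 + 1) ^ m * Real.sqrt (a ^ 2 + 1) ^ m) := by
      rw [hfdef]
      simp only [norm_div, norm_mul, norm_pow, hA, hB, Complex.norm_real,
        Real.norm_eq_abs, _root_.abs_of_pos ha]
    rw [hnf]
    have hApos : (0:ℝ) < Real.sqrt ((a * x) ^ 2 + 1) := Real.sqrt_pos.mpr (by positivity)
    have hBpos : (0:ℝ) < Real.sqrt (a ^ 2 + 1) := Real.sqrt_pos.mpr (by positivity)
    have hss := Real.sq_sqrt (by positivity : (0:ℝ) ≤ a ^ 2 + 1)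
    have hsn := Real.sqrt_nonneg (a ^ 2 + 1)
    have hsq : a ≤ Real.sqrt (a ^ 2 + 1) := by
      nlinarith [sq_nonneg (Real.sqrt (a ^ 2 + 1) - a), sq_nonneg (Real.sqrt (a ^ 2 + 1) + a)]
    have h1le : (1:ℝ) ≤ Real.sqrt (a ^ 2 + 1) := by
      nlinarith [sq_nonneg (Real.sqrt (a ^ 2 + 1) - 1), sq_nonneg a]
    have hnum : a ^ (m - 1) ≤ Real.sqrt (a ^ 2 + 1) ^ m :=
      calc a ^ (m - 1) ≤ Real.sqrt (a ^ 2 + 1) ^ (m - 1) := pow_le_pow_left₀ ha.le hsq _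
        _ ≤ Real.sqrt (a ^ 2 + 1) ^ m := pow_le_pow_right₀ h1le (by omega)
    calc a ^ (m - 1) / (Real.sqrt ((a * x) ^ 2 + 1) ^ m * Real.sqrt (a ^ 2 + 1) ^ m)
        ≤ Real.sqrt (a ^ 2 + 1) ^ m /
          (Real.sqrt ((a * x) ^ 2 + 1) ^ m * Real.sqrt (a ^ 2 + 1) ^ m) := by gcongr
      _ = (Real.sqrt ((a * x) ^ 2 + 1) ^ m)⁻¹ := by
          field_simp
      _ = g a := by
          show _ = (1 + (|x| * a) ^ 2) ^ (-s)
          have hy : (0:ℝ) < (a * x) ^ 2 + 1 := by positivity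
          rw [Real.sqrt_eq_rpow, ← Real.rpow_natCast (((a * x) ^ 2 + 1) ^ ((1:ℝ)/2)) m,
            ← Real.rpow_mul hy.le, ← Real.rpow_neg hy.le]
          rw [show 1 + (|x| * a) ^ 2 = (a * x) ^ 2 + 1 by
            rw [mul_pow, _root_.sq_abs]; ring]
          congr 1
          rw [hsdef]
          push_cast
          ring
  have hgi : IntegrableOn g (Set.Ioi 0) volume := by
    have := (integrableOn_Ioi_comp_mul_left_iff (fun u : ℝ => (1 + u ^ 2) ^ (-s)) 0
      hxa).mpr (by simpa using integrableH hs)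
    simpa [hgdef] using this
  have haeb : ∀ᵐ a ∂(volume.restrict (Set.Ioi (0:ℝ))), ‖f a‖ ≤ g a :=
    (ae_restrict_iff' measurableSet_Ioi).mpr (ae_of_all _ hnorm)
  have hfi : IntegrableOn f (Set.Ioi 0) volume :=
    hgi.mono' hcont.aestronglyMeasurable.restrict haeb
  refine ⟨hfi, ?_⟩
  have hval : ∫ a in Set.Ioi (0:ℝ), g a =
      |x|⁻¹ * (1 / 2 * (Real.Gamma (1/2) * Real.Gamma (s - 1/2) / Real.Gamma s)) := by
    have h1 := integral_comp_mul_left_Ioi (fun u : ℝ => (1 + u ^ 2) ^ (-s)) 0 hxa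
    simp only [mul_zero, smul_eq_mul] at h1
    rw [hgdef]
    rw [h1, intH hs]
  calc ‖∫ a in Set.Ioi (0:ℝ), f a‖ ≤ ∫ a in Set.Ioi (0:ℝ), g a :=
        norm_integral_le_of_norm_le hgi haeb
    _ = 1 / (2 * |x|) * (Real.Gamma (1/2) * Real.Gamma (s - 1/2) / Real.Gamma s) := by
        rw [hval]
        ring
end

section
/- Let x be a real number with |x| ≤ 2 and let t be a real number with 0 < t < 1. Then ∑_{m=1}^∞ ∑_{n=0}^{m−1} ∑_{k=0}^{n} X_{m−n+2k}(x) · t^{m+n} = (1 − t²)^{−1} · ∑_{u=1}^∞ c_u · X_u(x) · t^{u}, where c_u = u/2 if u is even and c_u = (u+1)/2 if u is odd; in particular both series converge. -/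
/-- `c u = u/2` if `u` is even and `(u+1)/2` if `u` is odd. -/
noncomputable def cCoeff (u : ℕ) : ℝ :=
  if Even u then (u : ℝ) / 2 else ((u : ℝ) + 1) / 2


lemma sin_nat_mul_le (θ : ℝ) : ∀ n : ℕ, |Real.sin (n * θ)| ≤ n * |Real.sin θ| := by
  intro n
  induction n with
  | zero => simp
  | succ n ih =>
    have : ((n : ℝ) + 1) * θ = n * θ + θ := by ring
    push_cast
    rw [this, Real.sin_add]
    calc |Real.sin (n * θ) * Real.cos θ + Real.cos (n * θ) * Real.sin θ|
        ≤ |Real.sin (n * θ) * Real.cos θ| + |Real.cos (n * θ) * Real.sin θ| := abs_add_le _ _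
      _ ≤ |Real.sin (n * θ)| * 1 + 1 * |Real.sin θ| := by
          rw [abs_mul, abs_mul]
          gcongr <;> [exact Real.abs_cos_le_one θ; exact Real.abs_cos_le_one _]
      _ ≤ n * |Real.sin θ| * 1 + 1 * |Real.sin θ| := by gcongr
      _ = ((n : ℝ) + 1) * |Real.sin θ| := by ring

lemma abs_U_le (n : ℕ) {y : ℝ} (hy : |y| ≤ 1) :
    |(Polynomial.Chebyshev.U ℝ (n : ℤ)).eval y| ≤ (n : ℝ) + 1 := by
  have hIoo : Set.Ioo (-1 : ℝ) 1 ⊆ {y : ℝ | |(Polynomial.Chebyshev.U ℝ (n : ℤ)).eval y| ≤ (n : ℝ) + 1} := by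
    intro y hy
    have hy1 : -1 ≤ y := le_of_lt hy.1
    have hy2 : y ≤ 1 := le_of_lt hy.2
    set θ := Real.arccos y with hθ
    have hcos : Real.cos θ = y := Real.cos_arccos hy1 hy2
    have hsin : Real.sin θ = Real.sqrt (1 - y ^ 2) := Real.sin_arccos y
    have hsinpos : 0 < Real.sin θ := by
      rw [hsin]
      apply Real.sqrt_pos.mpr
      nlinarith [hy.1, hy.2]
    have key := Polynomial.Chebyshev.U_real_cos θ (n : ℤ)
    rw [hcos] at key
    push_cast at key
    have h2 : |(Polynomial.Chebyshev.U ℝ (n : ℤ)).eval y| * Real.sin θ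
        = |Real.sin (((n : ℝ) + 1) * θ)| := by
      rw [← key, abs_mul, abs_of_pos hsinpos]
    have h3 : |Real.sin (((n : ℝ) + 1) * θ)| ≤ ((n : ℝ) + 1) * Real.sin θ := by
      have := sin_nat_mul_le θ (n + 1)
      push_cast at this
      rwa [abs_of_pos hsinpos] at this
    have := h2 ▸ h3
    calc |(Polynomial.Chebyshev.U ℝ (n : ℤ)).eval y|
        = |(Polynomial.Chebyshev.U ℝ (n : ℤ)).eval y| * Real.sin θ / Real.sin θ := by
          field_simp
      _ ≤ ((n : ℝ) + 1) * Real.sin θ / Real.sin θ := by gcongr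
      _ = (n : ℝ) + 1 := by field_simp
  have hclosed : IsClosed {y : ℝ | |(Polynomial.Chebyshev.U ℝ (n : ℤ)).eval y| ≤ (n : ℝ) + 1} := by
    apply isClosed_le
    · exact (Polynomial.continuous _).abs
    · exact continuous_const
  have hiccsub : Set.Icc (-1 : ℝ) 1 ⊆ {y : ℝ | |(Polynomial.Chebyshev.U ℝ (n : ℤ)).eval y| ≤ (n : ℝ) + 1} := by
    rw [← closure_Ioo (by norm_num : (-1 : ℝ) ≠ 1)]
    exact hclosed.closure_subset_iff.mpr hIoo
  exact hiccsub (abs_le.mp hy)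

lemma abs_chebX_le (ℓ : ℕ) {x : ℝ} (hx : |x| ≤ 2) : |chebX ℓ x| ≤ (ℓ : ℝ) + 1 := by
  have : |x / 2| ≤ 1 := by rw [abs_div]; simp; linarith [abs_le.mp hx |>.1, abs_le.mp hx |>.2]
  exact abs_U_le ℓ this

/-- triple-index function supported on `k ≤ n ≤ j`. -/
noncomputable def Gfun (x t : ℝ) (p : ℕ × ℕ × ℕ) : ℝ :=
  if p.2.1 ≤ p.1 ∧ p.2.2 ≤ p.2.1 then
    chebX ((p.1 + 1) - p.2.1 + 2 * p.2.2) x * t ^ ((p.1 + 1) + p.2.1) else 0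

noncomputable def Hfun (x t : ℝ) (q : ℕ × ℕ × ℕ) : ℝ :=
  chebX (q.1 + 1 + 2 * q.2.1) x * t ^ (q.1 + 1 + 2 * q.2.1 + 2 * q.2.2)

noncomputable def g2fun (x t : ℝ) (p : ℕ × ℕ) : ℝ :=
  chebX (p.1 + 1 + 2 * p.2) x * t ^ (p.1 + 1 + 2 * p.2)

noncomputable def H'fun (x t : ℝ) (q : (ℕ × ℕ) × ℕ) : ℝ :=
  g2fun x t q.1 * (t ^ 2) ^ q.2

noncomputable def Kfun (x t : ℝ) (p : ℕ × ℕ) : ℝ :=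
  if 2 * p.2 ≤ p.1 then chebX (p.1 + 1) x * t ^ (p.1 + 1) else 0

set_option maxHeartbeats 2000000 in
/-- For `|x| ≤ 2` and `0 < t < 1`,
`∑_{m≥1} ∑_{n=0}^{m-1} ∑_{k=0}^{n} X_{m-n+2k}(x) t^{m+n}
  = (1 - t²)⁻¹ ∑_{u≥1} c_u X_u(x) t^u`,
where `c_u = u/2` for `u` even and `(u+1)/2` for `u` odd;
in particular both series converge.  (Here the outer series on the left is
indexed by `m = j + 1`, `j ∈ ℕ`, and the series on the right by `u = j + 1`.) -/
theorem triple_sum_chebX (x : ℝ) (hx : |x| ≤ 2) (t : ℝ) (ht0 : 0 < t) (ht1 : t < 1) :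
    Summable (fun j : ℕ => ∑ n ∈ Finset.range (j + 1), ∑ k ∈ Finset.range (n + 1),
        chebX ((j + 1) - n + 2 * k) x * t ^ ((j + 1) + n)) ∧
    Summable (fun j : ℕ => cCoeff (j + 1) * chebX (j + 1) x * t ^ (j + 1)) ∧
    ∑' j : ℕ, (∑ n ∈ Finset.range (j + 1), ∑ k ∈ Finset.range (n + 1),
        chebX ((j + 1) - n + 2 * k) x * t ^ ((j + 1) + n)) =
      (1 - t ^ 2)⁻¹ * ∑' j : ℕ, cCoeff (j + 1) * chebX (j + 1) x * t ^ (j + 1) := by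
  have ht2nn : (0 : ℝ) ≤ t ^ 2 := sq_nonneg t
  have ht2lt : t ^ 2 < 1 := by nlinarith
  have hne : (1 : ℝ) - t ^ 2 ≠ 0 := by nlinarith
  -- summable building blocks
  have hnorm : ‖t‖ < 1 := by rwa [Real.norm_eq_abs, abs_of_pos ht0]
  have hnorm2 : ‖t ^ 2‖ < 1 := by rwa [Real.norm_eq_abs, abs_of_nonneg ht2nn]
  have hB1 : Summable (fun a : ℕ => ((a : ℝ) + 2) * t ^ a) := by
    have h1 : Summable (fun a : ℕ => (a : ℝ) ^ 1 * t ^ a) :=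
      summable_pow_mul_geometric_of_norm_lt_one 1 hnorm
    have h2 : Summable (fun a : ℕ => 2 * t ^ a) :=
      (summable_geometric_of_lt_one ht0.le ht1).mul_left 2
    exact (h1.add h2).congr fun a => by ring
  have hB2 : Summable (fun k : ℕ => (2 * (k : ℝ) + 2) * (t ^ 2) ^ k) := by
    have h1 : Summable (fun k : ℕ => 2 * ((k : ℝ) ^ 1 * (t ^ 2) ^ k)) :=
      (summable_pow_mul_geometric_of_norm_lt_one 1 hnorm2).mul_left 2
    have h2 : Summable (fun k : ℕ => 2 * (t ^ 2) ^ k) :=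
      (summable_geometric_of_lt_one ht2nn ht2lt).mul_left 2
    exact (h1.add h2).congr fun k => by ring
  have hB3 : Summable (fun i : ℕ => (t ^ 2) ^ i) := summable_geometric_of_lt_one ht2nn ht2lt
  -- pointwise bound
  have hterm : ∀ a k i : ℕ, ‖chebX (a + 1 + 2 * k) x * t ^ (a + 1 + 2 * k + 2 * i)‖ ≤
      ((a : ℝ) + 2) * t ^ a * ((2 * (k : ℝ) + 2) * (t ^ 2) ^ k * (t ^ 2) ^ i) := by
    intro a k i
    have h1 : |chebX (a + 1 + 2 * k) x| ≤ (a : ℝ) + 2 + 2 * k := by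
      have := abs_chebX_le (a + 1 + 2 * k) hx
      push_cast at this ⊢
      linarith
    have h2 : t ^ (a + 1 + 2 * k + 2 * i) ≤ t ^ a * (t ^ 2) ^ k * (t ^ 2) ^ i := by
      rw [← pow_mul, ← pow_mul, ← pow_add, ← pow_add]
      exact pow_le_pow_of_le_one ht0.le ht1.le (by omega)
    have hpp : (0 : ℝ) < t ^ (a + 1 + 2 * k + 2 * i) := pow_pos ht0 _
    rw [Real.norm_eq_abs, abs_mul, abs_of_pos hpp]
    calc |chebX (a + 1 + 2 * k) x| * t ^ (a + 1 + 2 * k + 2 * i)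
        ≤ ((a : ℝ) + 2 + 2 * k) * (t ^ a * (t ^ 2) ^ k * (t ^ 2) ^ i) := by
          apply mul_le_mul h1 h2 hpp.le (by positivity)
      _ ≤ (((a : ℝ) + 2) * (2 * (k : ℝ) + 2)) * (t ^ a * (t ^ 2) ^ k * (t ^ 2) ^ i) := by
          have hkn : (0:ℝ) ≤ (k : ℝ) := Nat.cast_nonneg k
          have han : (0:ℝ) ≤ (a : ℝ) := Nat.cast_nonneg a
          have : ((a : ℝ) + 2 + 2 * k) ≤ ((a : ℝ) + 2) * (2 * (k : ℝ) + 2) := by nlinarith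
          exact mul_le_mul_of_nonneg_right this (by positivity)
      _ = ((a : ℝ) + 2) * t ^ a * ((2 * (k : ℝ) + 2) * (t ^ 2) ^ k * (t ^ 2) ^ i) := by ring
  -- Summable H
  have hBin : Summable (fun p : ℕ × ℕ => (2 * (p.1 : ℝ) + 2) * (t ^ 2) ^ p.1 * (t ^ 2) ^ p.2) :=
    hB2.mul_of_nonneg hB3 (fun k => by positivity) (fun i => by positivity)
  have hBout : Summable (fun q : ℕ × (ℕ × ℕ) => ((q.1 : ℝ) + 2) * t ^ q.1 *
      ((2 * (q.2.1 : ℝ) + 2) * (t ^ 2) ^ q.2.1 * (t ^ 2) ^ q.2.2)) :=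
    hB1.mul_of_nonneg hBin (fun a => by positivity) (fun p => by positivity)
  have hH : Summable (Hfun x t) :=
    Summable.of_norm_bounded hBout (fun q => hterm q.1 q.2.1 q.2.2)
  -- Summable g2
  have hBg2 : Summable (fun p : ℕ × ℕ => ((p.1 : ℝ) + 2) * t ^ p.1 *
      ((2 * (p.2 : ℝ) + 2) * (t ^ 2) ^ p.2)) :=
    hB1.mul_of_nonneg hB2 (fun a => by positivity) (fun p => by positivity)
  have hg2 : Summable (g2fun x t) := by
    apply Summable.of_norm_bounded hBg2
    intro p
    have := hterm p.1 p.2 0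
    simpa [g2fun] using this
  -- reindex G ↔ H via φ
  set φ : ℕ × ℕ × ℕ → ℕ × ℕ × ℕ :=
    fun q => (q.1 + q.2.1 + q.2.2, (q.2.1 + q.2.2, q.2.1)) with hφdef
  have hφ : Function.Injective φ := by
    rintro ⟨a, k, i⟩ ⟨a', k', i'⟩ h
    simp only [hφdef, Prod.mk.injEq] at h
    obtain ⟨h1, h2, h3⟩ := h
    simp only [Prod.mk.injEq]
    omega
  have hGφ : ∀ q : ℕ × ℕ × ℕ, Gfun x t (φ q) = Hfun x t q := by
    rintro ⟨a, k, i⟩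
    simp only [hφdef, Gfun, Hfun]
    rw [if_pos ⟨by omega, by omega⟩]
    rw [show a + k + i + 1 - (k + i) + 2 * k = a + 1 + 2 * k from by omega,
      show a + k + i + 1 + (k + i) = a + 1 + 2 * k + 2 * i from by omega]
  have hsupp : ∀ p ∉ Set.range φ, Gfun x t p = 0 := by
    rintro ⟨j, n, k⟩ hp
    by_contra h
    apply hp
    have hc : n ≤ j ∧ k ≤ n := by
      by_contra hc
      exact h (if_neg hc)
    exact ⟨(j - n, k, n - k), by simp [hφdef, Prod.ext_iff]; omega⟩
  have hG : Summable (Gfun x t) :=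
    (hφ.summable_iff hsupp).mp (hH.congr fun q => (hGφ q).symm)
  have hGH : ∑' p, Gfun x t p = ∑' q, Hfun x t q := by
    rw [← hφ.tsum_eq (Function.support_subset_iff'.mpr hsupp)]
    exact tsum_congr hGφ
  -- LHS fiberwise
  have hfib : ∀ j : ℕ, HasSum (fun p : ℕ × ℕ => Gfun x t (j, p))
      (∑ n ∈ Finset.range (j + 1), ∑ k ∈ Finset.range (n + 1),
        chebX ((j + 1) - n + 2 * k) x * t ^ ((j + 1) + n)) := by
    intro j
    have h0 : ∀ p : ℕ × ℕ, p ∉ Finset.range (j + 1) ×ˢ Finset.range (j + 1) →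
        Gfun x t (j, p) = 0 := by
      rintro ⟨n, k⟩ hp
      simp only [Finset.mem_product, Finset.mem_range, not_and_or, not_lt] at hp
      apply if_neg
      dsimp only
      omega
    have h1 := hasSum_sum_of_ne_finset_zero (L := SummationFilter.unconditional _) h0
    have h2 : ∑ p ∈ Finset.range (j + 1) ×ˢ Finset.range (j + 1), Gfun x t (j, p)
        = ∑ n ∈ Finset.range (j + 1), ∑ k ∈ Finset.range (n + 1),
          chebX ((j + 1) - n + 2 * k) x * t ^ ((j + 1) + n) := by
      rw [Finset.sum_product]
      apply Finset.sum_congr rfl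
      intro n hn
      rw [Finset.mem_range] at hn
      have hsub : Finset.range (n + 1) ⊆ Finset.range (j + 1) := by
        apply Finset.range_subset_range.mpr; omega
      have hz : ∀ k ∈ Finset.range (j + 1), k ∉ Finset.range (n + 1) →
          Gfun x t (j, (n, k)) = 0 := by
        intro k _ hk
        rw [Finset.mem_range] at hk
        exact if_neg (by dsimp only; omega)
      rw [← Finset.sum_subset hsub hz]
      apply Finset.sum_congr rfl
      intro k hk
      rw [Finset.mem_range] at hk
      exact if_pos ⟨by dsimp only; omega, by dsimp only; omega⟩
    rwa [h2] at h1
  have hMain := hG.hasSum.prod_fiberwise hfib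
  -- H ↔ H' via prodAssoc
  have hHeq : ∀ q : ℕ × ℕ × ℕ, H'fun x t ((Equiv.prodAssoc ℕ ℕ ℕ).symm q) = Hfun x t q := by
    rintro ⟨a, k, i⟩
    simp only [Equiv.prodAssoc, Equiv.coe_fn_symm_mk, H'fun, g2fun, Hfun]
    rw [pow_add, pow_mul]
    ring
  have hH' : Summable (H'fun x t) :=
    ((Equiv.prodAssoc ℕ ℕ ℕ).symm.summable_iff).mp (hH.congr fun q => (hHeq q).symm)
  have hHH' : ∑' q, Hfun x t q = ∑' q, H'fun x t q := by
    rw [← (Equiv.prodAssoc ℕ ℕ ℕ).symm.tsum_eq (H'fun x t)]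
    exact tsum_congr fun q => (hHeq q).symm
  -- sum out the geometric factor
  have hfib2 : ∀ p : ℕ × ℕ, HasSum (fun i => H'fun x t (p, i)) (g2fun x t p * (1 - t ^ 2)⁻¹) :=
    fun p => (hasSum_geometric_of_lt_one ht2nn ht2lt).mul_left (g2fun x t p)
  have hHsum := hH'.hasSum.prod_fiberwise hfib2
  -- reindex g2 ↔ K via ψ
  set ψ : ℕ × ℕ → ℕ × ℕ := fun p => (p.1 + 2 * p.2, p.2) with hψdef
  have hψ : Function.Injective ψ := by
    rintro ⟨a, k⟩ ⟨a', k'⟩ h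
    simp only [hψdef, Prod.mk.injEq] at h ⊢
    omega
  have hKψ : ∀ p : ℕ × ℕ, Kfun x t (ψ p) = g2fun x t p := by
    rintro ⟨a, k⟩
    simp only [hψdef, Kfun, g2fun]
    rw [if_pos (by omega : 2 * k ≤ a + 2 * k),
      show a + 2 * k + 1 = a + 1 + 2 * k from by omega]
  have hKsupp : ∀ p ∉ Set.range ψ, Kfun x t p = 0 := by
    rintro ⟨v, k⟩ hp
    by_contra h
    apply hp
    have hc : 2 * k ≤ v := by
      by_contra hc
      exact h (if_neg hc)
    exact ⟨(v - 2 * k, k), by simp [hψdef, Prod.ext_iff]; omega⟩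
  have hK : Summable (Kfun x t) :=
    (hψ.summable_iff hKsupp).mp (hg2.congr fun p => (hKψ p).symm)
  have hg2K : ∑' p, g2fun x t p = ∑' p, Kfun x t p := by
    rw [← hψ.tsum_eq (Function.support_subset_iff'.mpr hKsupp)]
    exact tsum_congr fun p => (hKψ p).symm
  -- K fiberwise
  have hfib3 : ∀ v : ℕ, HasSum (fun k => Kfun x t (v, k))
      (cCoeff (v + 1) * chebX (v + 1) x * t ^ (v + 1)) := by
    intro v
    have h0 : ∀ k ∉ Finset.range (v / 2 + 1), Kfun x t (v, k) = 0 := by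
      intro k hk
      rw [Finset.mem_range] at hk
      exact if_neg (by dsimp only; omega)
    have h1 := hasSum_sum_of_ne_finset_zero (L := SummationFilter.unconditional _) h0
    have h2 : ∑ k ∈ Finset.range (v / 2 + 1), Kfun x t (v, k)
        = cCoeff (v + 1) * chebX (v + 1) x * t ^ (v + 1) := by
      have h3 : ∀ k ∈ Finset.range (v / 2 + 1), Kfun x t (v, k)
          = chebX (v + 1) x * t ^ (v + 1) := by
        intro k hk
        rw [Finset.mem_range] at hk
        exact if_pos (by dsimp only; omega)
      rw [Finset.sum_congr rfl h3, Finset.sum_const, Finset.card_range, nsmul_eq_mul]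
      have hc : ((v / 2 + 1 : ℕ) : ℝ) = cCoeff (v + 1) := by
        rcases Nat.even_or_odd v with ⟨s, hs⟩ | ⟨s, hs⟩
        · have hv2 : v / 2 + 1 = s + 1 := by omega
          have hnev : ¬ Even (v + 1) := by
            rw [Nat.even_add_one]
            simp only [not_not]
            exact ⟨s, hs⟩
          rw [hv2, cCoeff, if_neg hnev]
          push_cast
          rw [hs]
          push_cast
          ring
        · have hv2 : v / 2 + 1 = s + 1 := by omega
          have hev : Even (v + 1) := ⟨s + 1, by omega⟩
          rw [hv2, cCoeff, if_pos hev]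
          push_cast
          rw [hs]
          push_cast
          ring
      rw [← hc]
      ring
    rwa [h2] at h1
  have hFinal := hK.hasSum.prod_fiberwise hfib3
  refine ⟨hMain.summable, hFinal.summable, ?_⟩
  rw [hMain.tsum_eq, hGH, hHH', ← hHsum.tsum_eq, tsum_mul_right, hg2K, ← hFinal.tsum_eq]
  ring
end
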